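/- arXiv:2406.11222 — 10 statements merged into one kernel-verified Lean document; each statement's English description precedes it below -/
import Mathlib

section
/- Let R be a ring and M an R-module. Then every cyclic submodule of M is a direct summand of M if and only if every finitely generated submodule of M is a direct summand of M. -/
/-- A submodule is a direct summand if it has a complement. -/
def Submodule.IsDirectSummand {R M : Type*} [Ring R] [AddCommGroup M] [Module R M]
    (N : Submodule R M) : Prop :=
  ∃ N' : Submodule R M, IsCompl N N'

lemma sup_span_singleton_summand {R M : Type*} [Ring R] [AddCommGroup M] [Module R M]
    (h : ∀ m : M, (Submodule.span R {m}).IsDirectSummand)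
    (A : Submodule R M) (hA : A.IsDirectSummand) (m : M) :
    (A ⊔ Submodule.span R {m}).IsDirectSummand := by
  obtain ⟨A', hAA'⟩ := hA
  have hm : m ∈ A ⊔ A' := by rw [hAA'.codisjoint.eq_top]; trivial
  obtain ⟨a, ha, b, hb, rfl⟩ := Submodule.mem_sup.1 hm
  obtain ⟨C, hC⟩ := h b
  have hbA' : Submodule.span R {b} ≤ A' := by
    rw [Submodule.span_le, Set.singleton_subset_iff]; exact hb
  have hEq : A ⊔ Submodule.span R {a + b} = A ⊔ Submodule.span R {b} := by
    apply le_antisymm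
    · refine sup_le le_sup_left ?_
      rw [Submodule.span_le, Set.singleton_subset_iff]
      exact Submodule.add_mem _ (Submodule.mem_sup_left ha)
        (Submodule.mem_sup_right (Submodule.mem_span_singleton_self b))
    · refine sup_le le_sup_left ?_
      rw [Submodule.span_le, Set.singleton_subset_iff]
      have h2 : (a + b) - a ∈ A ⊔ Submodule.span R {a + b} :=
        Submodule.sub_mem _
          (Submodule.mem_sup_right (Submodule.mem_span_singleton_self (a + b)))
          (Submodule.mem_sup_left ha)
      simpa using h2
  rw [hEq]
  refine ⟨A' ⊓ C, ?_, ?_⟩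
  · rw [Submodule.disjoint_def]
    intro x hx hx'
    obtain ⟨hxA', hxC⟩ := Submodule.mem_inf.1 hx'
    obtain ⟨u, hu, v, hv, rfl⟩ := Submodule.mem_sup.1 hx
    have hvA' : v ∈ A' := hbA' hv
    have huA' : u ∈ A' := by
      have : u = (u + v) - v := by abel
      rw [this]; exact Submodule.sub_mem _ hxA' hvA'
    have hu0 : u = 0 := by
      have h3 := Submodule.mem_inf.2 ⟨hu, huA'⟩
      rw [hAA'.disjoint.eq_bot, Submodule.mem_bot] at h3
      exact h3
    have hv0 : v = 0 := by
      have h4 := Submodule.mem_inf.2 ⟨hv, show v ∈ C by simpa [hu0] using hxC⟩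
      rw [hC.disjoint.eq_bot, Submodule.mem_bot] at h4
      exact h4
    simp [hu0, hv0]
  · rw [codisjoint_iff]
    have h1 : Submodule.span R {b} ⊔ C ⊓ A' = A' := by
      have := sup_inf_assoc_of_le (y := C) (z := A') hbA'
      rw [hC.codisjoint.eq_top, top_inf_eq] at this
      exact this.symm
    calc A ⊔ Submodule.span R {b} ⊔ A' ⊓ C
        = A ⊔ (Submodule.span R {b} ⊔ C ⊓ A') := by rw [sup_assoc, inf_comm]
      _ = A ⊔ A' := by rw [h1]
      _ = ⊤ := hAA'.codisjoint.eq_top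

/-- Every cyclic submodule of `M` is a direct summand of `M` if and only if every
finitely generated submodule of `M` is a direct summand of `M`. -/
theorem cyclic_summand_iff_fg_summand {R M : Type*} [Ring R] [AddCommGroup M] [Module R M] :
    (∀ m : M, (Submodule.span R {m}).IsDirectSummand) ↔
      (∀ N : Submodule R M, N.FG → N.IsDirectSummand) := by
  constructor
  · intro h N hN
    obtain ⟨s, rfl⟩ := hN
    classical
    induction s using Finset.induction_on with
    | empty => exact ⟨⊤, by simpa [Submodule.span_empty] using isCompl_bot_top⟩
    | @insert a s _ ih =>
        rw [Finset.coe_insert, Submodule.span_insert, sup_comm]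
        exact sup_span_singleton_summand h _ ih a
  · intro h m
    exact h _ (Submodule.fg_span_singleton m)
end

section
/- A ring R is virtually regular as a module over itself if and only if R is a pp-ring, i.e., every principal ideal of R is a projective R-module. -/
/-- A module is virtually regular if every cyclic submodule is isomorphic to a
direct summand. -/
def VirtuallyRegular (R M : Type*) [Ring R] [AddCommGroup M] [Module R M] : Prop :=
  ∀ m : M, ∃ N : Submodule R M, N.IsDirectSummand ∧
    Nonempty ((Submodule.span R {m}) ≃ₗ[R] N)

/-- `R` is virtually regular as a module over itself iff `R` is a pp-ring, i.e. every
principal ideal of `R` is projective. -/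
theorem virtuallyRegular_self_iff_pp_ring {R : Type*} [Ring R] :
    VirtuallyRegular R R ↔ ∀ a : R, Module.Projective R (Ideal.span {a}) := by
  constructor
  · intro h a
    obtain ⟨N, ⟨N', hc⟩, ⟨e⟩⟩ := h a
    -- span R {a} is a direct summand of R up to iso, hence projective
    have : Ideal.span {a} = Submodule.span R {a} := rfl
    rw [this]
    refine Module.Projective.of_split
      (N.subtype.comp (e : Submodule.span R {a} →ₗ[R] N))
      ((e.symm : N →ₗ[R] Submodule.span R {a}).comp
        (N.projectionOnto N' hc)) ?_
    ext x
    simp [Submodule.projectionOnto_apply_left hc]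
  · intro h m
    haveI : Module.Projective R (Submodule.span R {m}) := h m
    -- surjection π : R → span {m}
    let π : R →ₗ[R] Submodule.span R {m} :=
      (LinearMap.toSpanSingleton R R m).codRestrict (Submodule.span R {m})
        (fun r => Submodule.smul_mem _ r (Submodule.mem_span_singleton_self m))
    have hπ : Function.Surjective π := by
      rintro ⟨x, hx⟩
      obtain ⟨r, rfl⟩ := Submodule.mem_span_singleton.mp hx
      exact ⟨r, rfl⟩
    obtain ⟨s, hs⟩ := Module.projective_lifting_property π LinearMap.id hπ
    have hsec : ∀ y : Submodule.span R {m}, π (s y) = y := fun y =>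
      congrArg (· y) hs
    have hinj : Function.Injective s := by
      intro x y hxy
      have := hsec x
      rw [hxy, hsec y] at this
      exact this.symm
    refine ⟨LinearMap.range s, ⟨LinearMap.ker ((s.comp π).codRestrict
      (LinearMap.range s) (fun r => ⟨π r, rfl⟩)), ?_⟩,
      ⟨LinearEquiv.ofInjective s hinj⟩⟩
    refine (LinearMap.isCompl_of_proj ?_).symm.symm
    rintro ⟨x, y, rfl⟩
    ext
    exact congrArg s (hsec y)
end

section
/- Let R be a ring and M an R-module such that every cyclic submodule of M is a direct summand of M (M is strongly regular). Then M is completely virtually regular, i.e., every submodule of M is virtually regular. -/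
/-- A module is completely virtually regular if every submodule is virtually regular. -/
def CompletelyVirtuallyRegular (R M : Type*) [Ring R] [AddCommGroup M] [Module R M] : Prop :=
  ∀ A : Submodule R M, VirtuallyRegular R A

/-- If every cyclic submodule of `M` is a direct summand of `M` (i.e. `M` is strongly
regular), then `M` is completely virtually regular. -/
theorem completelyVirtuallyRegular_of_stronglyRegular {R M : Type*} [Ring R]
    [AddCommGroup M] [Module R M]
    (h : ∀ m : M, (Submodule.span R {m}).IsDirectSummand) :
    CompletelyVirtuallyRegular R M := by
  intro A m
  refine ⟨Submodule.span R {m}, ?_, ⟨LinearEquiv.refl _ _⟩⟩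
  obtain ⟨N', hN'⟩ := h (m : M)
  -- span of ↑m in M is the image of span of m in A
  have hmap : Submodule.map A.subtype (Submodule.span R {m}) =
      Submodule.span R {(m : M)} := by
    rw [Submodule.map_span, Set.image_singleton]; rfl
  refine ⟨Submodule.comap A.subtype N', ?_, ?_⟩
  · -- disjoint
    rw [Submodule.disjoint_def]
    intro x hx hx'
    have h1 : (x : M) ∈ Submodule.span R {(m : M)} := by
      rw [← hmap]; exact ⟨x, hx, rfl⟩
    have h2 : (x : M) ∈ N' := hx'
    have : (x : M) = 0 := by
      have := hN'.disjoint
      rw [Submodule.disjoint_def] at this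
      exact this _ h1 h2
    exact Subtype.ext this
  · -- codisjoint
    rw [codisjoint_iff, eq_top_iff]
    rintro ⟨a, ha⟩ -
    have : a ∈ Submodule.span R {(m : M)} ⊔ N' := by
      rw [hN'.sup_eq_top]; trivial
    obtain ⟨s, hs, n, hn, hsn⟩ := Submodule.mem_sup.mp this
    rw [← hmap] at hs
    obtain ⟨s₀, hs₀, hs₀e⟩ := hs
    have hnA : n ∈ A := by
      have : n = a - s := by rw [← hsn]; abel
      rw [this]
      exact A.sub_mem ha (hs₀e ▸ s₀.2)
    refine Submodule.mem_sup.mpr ⟨s₀, hs₀, ⟨n, hnA⟩, hn, ?_⟩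
    exact Subtype.ext (by rw [← hs₀e] at hsn; simpa using hsn)
end

section
/- Let R be a commutative ring and A a nonzero indecomposable R-module. Then A is virtually regular if and only if A is isomorphic to R/P for some prime ideal P of R. -/
open Submodule

lemma aux_smul_mk {R : Type*} [CommRing R] (I : Ideal R) (x r : R) :
    x • Ideal.Quotient.mk I r = Ideal.Quotient.mk I (x * r) := rfl

lemma quot_iso_le {R : Type*} [CommRing R] {I J : Ideal R}
    (e : (R ⧸ I) ≃ₗ[R] (R ⧸ J)) : I ≤ J := by
  intro x hx
  obtain ⟨r, hr⟩ := Ideal.Quotient.mk_surjective (e.symm (Ideal.Quotient.mk J 1))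
  have h0 : x • (Ideal.Quotient.mk I r) = 0 := by
    rw [aux_smul_mk]
    exact Ideal.Quotient.eq_zero_iff_mem.mpr (I.mul_mem_right r hx)
  have := congrArg e (hr ▸ h0 : x • e.symm (Ideal.Quotient.mk J 1) = 0)
  rw [map_smul, e.apply_symm_apply, map_zero, aux_smul_mk, mul_one,
    Ideal.Quotient.eq_zero_iff_mem] at this
  exact this

lemma quot_iso_eq {R : Type*} [CommRing R] {I J : Ideal R}
    (e : (R ⧸ I) ≃ₗ[R] (R ⧸ J)) : I = J :=
  le_antisymm (quot_iso_le e) (quot_iso_le e.symm)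

/-- A nonzero indecomposable module `A` over a commutative ring `R` is virtually
regular iff `A ≅ R / P` for some prime ideal `P` of `R`. -/
theorem indecomposable_virtuallyRegular_iff {R A : Type*} [CommRing R]
    [AddCommGroup A] [Module R A] [Nontrivial A]
    (hind : ∀ B C : Submodule R A, IsCompl B C → B = ⊥ ∨ C = ⊥) :
    VirtuallyRegular R A ↔
      ∃ P : Ideal R, P.IsPrime ∧ Nonempty (A ≃ₗ[R] R ⧸ P) := by
  constructor
  · intro hvr
    -- every nonzero element generates a cyclic submodule iso to A
    have key : ∀ a : A, a ≠ 0 → Nonempty ((span R {a}) ≃ₗ[R] A) := by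
      intro a ha
      obtain ⟨N, ⟨N', hcompl⟩, ⟨f⟩⟩ := hvr a
      rcases hind N N' hcompl with hN | hN'
      · exfalso
        subst hN
        have h1 : f ⟨a, mem_span_singleton_self a⟩ = 0 := Subsingleton.elim _ _
        have h2 := f.injective (h1.trans (map_zero f).symm)
        exact ha (by simpa using congrArg Subtype.val h2)
      · subst hN'
        have hNtop : N = ⊤ := by simpa using hcompl.sup_eq_top
        subst hNtop
        exact ⟨f.trans (Submodule.topEquiv)⟩
    obtain ⟨a, ha⟩ := exists_ne (0 : A)
    obtain ⟨f⟩ := key a ha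
    refine ⟨Ideal.torsionOf R A a, ⟨?_, ?_⟩, ⟨(f.symm.trans
      (Ideal.quotTorsionOfEquivSpanSingleton R A a).symm)⟩⟩
    · intro htop
      have : (1 : R) ∈ Ideal.torsionOf R A a := htop ▸ trivial
      rw [Ideal.mem_torsionOf_iff, one_smul] at this
      exact ha this
    · intro r s hrs
      by_cases hr : r ∈ Ideal.torsionOf R A a
      · exact Or.inl hr
      · right
        rw [Ideal.mem_torsionOf_iff] at hr
        have hra : r • a ≠ 0 := hr
        obtain ⟨g⟩ := key (r • a) hra
        have heq : Ideal.torsionOf R A (r • a) = Ideal.torsionOf R A a :=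
          quot_iso_eq ((Ideal.quotTorsionOfEquivSpanSingleton R A (r • a)).trans
            (g.trans (f.symm.trans (Ideal.quotTorsionOfEquivSpanSingleton R A a).symm)))
        have hmem : s ∈ Ideal.torsionOf R A (r • a) := by
          rw [Ideal.mem_torsionOf_iff, smul_smul, mul_comm]
          exact (Ideal.mem_torsionOf_iff a (r * s)).mp hrs
        exact heq ▸ hmem
  · rintro ⟨P, hP, ⟨e⟩⟩
    intro m
    by_cases hm : m = 0
    · subst hm
      exact ⟨⊥, ⟨⊤, isCompl_bot_top⟩,
        ⟨LinearEquiv.ofEq _ _ (by simp [Submodule.span_zero_singleton])⟩⟩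
    · refine ⟨⊤, ⟨⊥, isCompl_top_bot⟩, ?_⟩
      have htors : Ideal.torsionOf R A m = P := by
        obtain ⟨r, hr⟩ := Ideal.Quotient.mk_surjective (e m)
        have hrP : r ∉ P := by
          intro h
          apply hm
          apply e.injective
          rw [map_zero, ← hr, Ideal.Quotient.eq_zero_iff_mem]
          exact h
        ext s
        rw [Ideal.mem_torsionOf_iff]
        constructor
        · intro hs
          have : s • e m = 0 := by rw [← map_smul, hs, map_zero]
          rw [← hr, aux_smul_mk, Ideal.Quotient.eq_zero_iff_mem] at this
          exact (hP.mem_or_mem this).resolve_right hrP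
        · intro hs
          apply e.injective
          rw [map_smul, map_zero, ← hr, aux_smul_mk, Ideal.Quotient.eq_zero_iff_mem]
          exact P.mul_mem_right r hs
      refine ⟨?_⟩
      have e2 : (R ⧸ Ideal.torsionOf R A m) ≃ₗ[R] A := htors ▸ e.symm
      exact ((Ideal.quotTorsionOfEquivSpanSingleton R A m).symm.trans e2).trans
        Submodule.topEquiv.symm
end

section
/- Let R be a commutative integral domain and M a virtually regular R-module. Then the torsion submodule T(M) is virtually regular and the quotient module M/T(M) is virtually regular. -/
section Aux

variable {R M M₂ : Type*} [CommRing R] [AddCommGroup M] [AddCommGroup M₂]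
  [Module R M] [Module R M₂]

/-- A submodule disjoint from the kernel is isomorphic to its image. -/
noncomputable def auxMapEquiv (f : M →ₗ[R] M₂) (N : Submodule R M)
    (hd : Disjoint (LinearMap.ker f) N) : N ≃ₗ[R] N.map f :=
  (LinearEquiv.ofInjective (f ∘ₗ N.subtype) (by
    rw [← LinearMap.ker_eq_bot, LinearMap.ker_comp]
    rw [Submodule.eq_bot_iff]
    rintro ⟨x, hxN⟩ hx
    simp only [Submodule.mem_comap, Submodule.coe_subtype] at hx
    have : x = 0 := hd.le_bot ⟨hx, hxN⟩
    exact Subtype.ext this)).trans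
  (LinearEquiv.ofEq _ _ (by rw [LinearMap.range_comp, Submodule.range_subtype]))

/-- Torsion elements map to torsion elements. -/
theorem aux_torsion_map (f : M →ₗ[R] M₂) {x : M} (hx : x ∈ Submodule.torsion R M) :
    f x ∈ Submodule.torsion R M₂ := by
  obtain ⟨r, hr⟩ := hx
  exact ⟨r, by rw [Submonoid.smul_def, ← map_smul, ← Submonoid.smul_def, hr, map_zero]⟩

/-- An element of a submodule that is torsion in the ambient module is torsion in
the submodule. -/
theorem aux_torsion_of_coe {P : Submodule R M} {x : P}
    (hx : (x : M) ∈ Submodule.torsion R M) : x ∈ Submodule.torsion R P := by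
  obtain ⟨r, hr⟩ := hx
  refine ⟨r, Subtype.ext ?_⟩
  rw [Submonoid.smul_def] at hr ⊢
  simpa using hr

end Aux

/-- If `M` is a virtually regular module over a commutative domain, then its torsion
submodule `T(M)` and the quotient `M / T(M)` are virtually regular. -/
theorem torsion_and_quotient_virtuallyRegular {R M : Type*} [CommRing R] [IsDomain R]
    [AddCommGroup M] [Module R M] (h : VirtuallyRegular R M) :
    VirtuallyRegular R (Submodule.torsion R M) ∧
      VirtuallyRegular R (M ⧸ Submodule.torsion R M) := by
  set T := Submodule.torsion R M with hT
  have span_torsion : ∀ t : M, t ∈ T → ∀ x ∈ Submodule.span R {t}, x ∈ T := by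
    intro t ht x hx
    obtain ⟨a, ha⟩ := Submodule.mem_span_singleton.mp hx
    obtain ⟨r, hr⟩ := ht
    refine ⟨r, ?_⟩
    rw [← ha, Submonoid.smul_def] at *
    rw [smul_comm, hr, smul_zero]
  constructor
  · -- torsion submodule is virtually regular
    intro t
    obtain ⟨N, ⟨N', hcompl⟩, ⟨e⟩⟩ := h (t : M)
    -- N is contained in T
    have hN_le : N ≤ T := by
      intro n hn
      set x : Submodule.span R {(t : M)} := e.symm ⟨n, hn⟩ with hx
      have hx_tor : x ∈ Submodule.torsion R (Submodule.span R {(t : M)}) :=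
        aux_torsion_of_coe (span_torsion (t : M) t.2 _ x.2)
      have hex : e x = ⟨n, hn⟩ := by rw [hx]; exact e.apply_symm_apply _
      have hn_eq : n = (N.subtype ∘ₗ e.toLinearMap) x := by simp [hex]
      rw [hn_eq]
      exact aux_torsion_map _ hx_tor
    -- now build the summand of T
    refine ⟨N.comap T.subtype, ⟨N'.comap T.subtype, ?_⟩, ⟨?_⟩⟩
    · constructor
      · rw [disjoint_iff]
        rw [Submodule.eq_bot_iff]
        rintro ⟨y, hy⟩ ⟨h1, h2⟩
        have hy0 : y = 0 := hcompl.disjoint.le_bot ⟨h1, h2⟩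
        exact Subtype.ext hy0
      · rw [codisjoint_iff]
        rw [Submodule.eq_top_iff']
        rintro ⟨y, hy⟩
        have hyT : y ∈ N ⊔ N' := by rw [codisjoint_iff.mp hcompl.codisjoint]; trivial
        obtain ⟨a, ha, b, hb, hab⟩ := Submodule.mem_sup.mp hyT
        have hbT : b ∈ T := by
          have haT : a ∈ T := hN_le ha
          have : b = y - a := by rw [← hab]; abel
          rw [this]; exact T.sub_mem hy haT
        refine Submodule.mem_sup.mpr ⟨⟨a, hN_le ha⟩, ha, ⟨b, hbT⟩, hb, ?_⟩
        exact Subtype.ext hab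
    · -- span R {t} ≃ N.comap T.subtype
      have h1 : Submodule.map T.subtype (Submodule.span R {t}) =
          Submodule.span R {(t : M)} := by
        rw [Submodule.map_span, Set.image_singleton]; rfl
      have h2 : Submodule.map T.subtype (N.comap T.subtype) = N := by
        rw [Submodule.map_comap_eq, Submodule.range_subtype, inf_eq_right.mpr hN_le]
      exact (((auxMapEquiv T.subtype _ (by simp [Submodule.ker_subtype])).trans
        (LinearEquiv.ofEq _ _ h1)).trans e).trans
        ((auxMapEquiv T.subtype _ (by simp [Submodule.ker_subtype])).trans
          (LinearEquiv.ofEq _ _ h2)).symm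
  · -- quotient is virtually regular
    intro x
    by_cases hx0 : x = 0
    · refine ⟨⊥, ⟨⊤, isCompl_bot_top⟩, ⟨LinearEquiv.ofEq _ _ ?_⟩⟩
      rw [hx0, Submodule.span_zero_singleton]
    · obtain ⟨m, hm⟩ := Submodule.Quotient.mk_surjective T x
      have hmT : m ∉ T := fun hmem => hx0 (by
        rw [← hm]; exact (Submodule.Quotient.mk_eq_zero T).mpr hmem)
      obtain ⟨N, ⟨N', hcompl⟩, ⟨e⟩⟩ := h m
      -- span R {m} is disjoint from T
      have hdisj_span : Disjoint T (Submodule.span R {m}) := by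
        rw [Submodule.disjoint_def]
        intro z hzT hzs
        obtain ⟨a, ha⟩ := Submodule.mem_span_singleton.mp hzs
        by_cases ha0 : a = 0
        · rw [← ha, ha0, zero_smul]
        · exfalso
          obtain ⟨r, hr⟩ := hzT
          rw [← ha, Submonoid.smul_def, smul_smul] at hr
          have hrne : (r : R) ≠ 0 := nonZeroDivisors.coe_ne_zero r
          refine hmT ⟨⟨(r : R) * a, mem_nonZeroDivisors_of_ne_zero
            (mul_ne_zero hrne ha0)⟩, ?_⟩
          rw [Submonoid.smul_def]
          exact hr
      -- N is disjoint from T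
      have hdisj_N : Disjoint T N := by
        rw [Submodule.disjoint_def]
        intro z hzT hzN
        set y : Submodule.span R {m} := e.symm ⟨z, hzN⟩ with hy
        have hz_tor : (⟨z, hzN⟩ : N) ∈ Submodule.torsion R N :=
          aux_torsion_of_coe hzT
        have hy_tor : y ∈ Submodule.torsion R (Submodule.span R {m}) :=
          aux_torsion_map e.symm.toLinearMap hz_tor
        have hyM_tor : (y : M) ∈ T :=
          aux_torsion_map (Submodule.span R {m}).subtype hy_tor
        have hy0 : (y : M) = 0 := hdisj_span.le_bot ⟨hyM_tor, y.2⟩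
        have : y = 0 := Subtype.ext hy0
        have : (⟨z, hzN⟩ : N) = 0 := by
          rw [← e.apply_symm_apply ⟨z, hzN⟩, ← hy, this, map_zero]
        exact congrArg Subtype.val this
      set π := T.mkQ with hπ
      have hker : LinearMap.ker π = T := Submodule.ker_mkQ T
      refine ⟨N.map π, ⟨N'.map π, ?_⟩, ⟨?_⟩⟩
      · constructor
        · rw [disjoint_iff, Submodule.eq_bot_iff]
          rintro z ⟨⟨a, haN, hza⟩, ⟨b, hbN, hzb⟩⟩
          have hab : a - b ∈ T := by
            rw [← hker]
            simp only [LinearMap.mem_ker, map_sub, hza, hzb, sub_self]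
          obtain ⟨r, hr⟩ := hab
          rw [Submonoid.smul_def, smul_sub, sub_eq_zero] at hr
          have hmem : (r : R) • a ∈ N ⊓ N' :=
            ⟨N.smul_mem _ haN, hr ▸ N'.smul_mem _ hbN⟩
          have hra0 : (r : R) • a = 0 := by
            rwa [disjoint_iff.mp hcompl.disjoint, Submodule.mem_bot] at hmem
          have haT : a ∈ T := ⟨r, by rw [Submonoid.smul_def]; exact hra0⟩
          have ha0 : a = 0 := hdisj_N.le_bot ⟨haT, haN⟩
          rw [← hza, ha0, map_zero]
        · rw [codisjoint_iff, ← Submodule.map_sup,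
            codisjoint_iff.mp hcompl.codisjoint, Submodule.map_top,
            Submodule.range_mkQ]
      · -- span R {x} ≃ N.map π
        have h1 : Submodule.span R {x} = Submodule.map π (Submodule.span R {m}) := by
          rw [Submodule.map_span, Set.image_singleton]
          exact congrArg _ (congrArg _ hm.symm)
        have hd1 : Disjoint (LinearMap.ker π) (Submodule.span R {m}) := by
          rw [hker]; exact hdisj_span
        have hd2 : Disjoint (LinearMap.ker π) N := by rw [hker]; exact hdisj_N
        exact ((LinearEquiv.ofEq _ _ h1).trans
          (auxMapEquiv π (Submodule.span R {m}) hd1).symm).trans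
          (e.trans (auxMapEquiv π N hd2))
end

section
/- An abelian group M (i.e., a ℤ-module) is virtually regular if and only if its torsion subgroup T(M) and the quotient group M/T(M) are both virtually regular. -/
open Submodule

section Helpers

/-- Two elements of the same additive order generate isomorphic cyclic ℤ-modules. -/
noncomputable def spanEquivOfOrderEq {M₁ M₂ : Type*} [AddCommGroup M₁] [AddCommGroup M₂]
    {x : M₁} {y : M₂} (h : addOrderOf x = addOrderOf y) :
    (span ℤ {x} : Submodule ℤ M₁) ≃ₗ[ℤ] (span ℤ {y} : Submodule ℤ M₂) :=
  (CharacterModule.intSpanEquivQuotAddOrderOf x) ≪≫ₗ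
    (Submodule.quotEquivOfEq _ _ (by rw [h])) ≪≫ₗ
    (CharacterModule.intSpanEquivQuotAddOrderOf y).symm

lemma gen_of_iso {M₁ M₂ : Type*} [AddCommGroup M₁] [AddCommGroup M₂] {m : M₁}
    {N : Submodule ℤ M₂} (e : (span ℤ {m} : Submodule ℤ M₁) ≃ₗ[ℤ] N) :
    ∃ u : M₂, N = span ℤ {u} ∧ addOrderOf u = addOrderOf m := by
  set ms : (span ℤ {m} : Submodule ℤ M₁) := ⟨m, mem_span_singleton_self m⟩ with hms
  refine ⟨(e ms : M₂), ?_, ?_⟩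
  · ext x
    rw [mem_span_singleton]
    constructor
    · intro hx
      obtain ⟨a, ha⟩ := mem_span_singleton.mp (e.symm ⟨x, hx⟩).2
      refine ⟨a, ?_⟩
      have : e.symm ⟨x, hx⟩ = a • ms := Subtype.ext ha.symm
      have h2 := congrArg e this
      rw [e.apply_symm_apply, map_smul] at h2
      exact congrArg Subtype.val h2.symm
    · rintro ⟨a, rfl⟩
      exact N.smul_mem a (e ms).2
  · have hf : Function.Injective
        (N.subtype.toAddMonoidHom.comp (e : span ℤ {m} →ₗ[ℤ] N).toAddMonoidHom) :=
      Subtype.val_injective.comp e.injective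
    have h2 : addOrderOf ((N.subtype.toAddMonoidHom.comp
        (e : span ℤ {m} →ₗ[ℤ] N).toAddMonoidHom) ms) = addOrderOf ms :=
      addOrderOf_injective _ hf ms
    have h3 : addOrderOf ms = addOrderOf m :=
      (addOrderOf_injective (span ℤ {m}).subtype.toAddMonoidHom Subtype.val_injective ms).symm
    exact h2.trans h3

lemma zsmul_eq_zero_of_orderZero {M : Type*} [AddCommGroup M] {x : M}
    (h : addOrderOf x = 0) {a : ℤ} (ha : a • x = 0) : a = 0 := by
  have := addOrderOf_dvd_iff_zsmul_eq_zero.mpr ha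
  rwa [h, Nat.cast_zero, zero_dvd_iff] at this

lemma mem_torsion_iff_addOrderOf_ne_zero {M : Type*} [AddCommGroup M] (x : M) :
    x ∈ torsion ℤ M ↔ addOrderOf x ≠ 0 := by
  rw [mem_torsion_iff]
  constructor
  · rintro ⟨⟨a, ha⟩, h⟩ h0
    exact (nonZeroDivisors.ne_zero ha) (zsmul_eq_zero_of_orderZero h0 h)
  · intro h
    refine ⟨⟨(addOrderOf x : ℤ), mem_nonZeroDivisors_of_ne_zero (by exact_mod_cast h)⟩, ?_⟩
    show (addOrderOf x : ℤ) • x = 0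
    exact addOrderOf_dvd_iff_zsmul_eq_zero.mp dvd_rfl

lemma mem_torsion_of_zsmul {M : Type*} [AddCommGroup M] {c : ℤ} (hc : c ≠ 0) {x : M}
    (h : c • x = 0) : x ∈ torsion ℤ M := by
  rw [mem_torsion_iff_addOrderOf_ne_zero]
  intro h0
  exact hc (zsmul_eq_zero_of_orderZero h0 h)

lemma ord_val {M : Type*} [AddCommGroup M] {p : Submodule ℤ M} (x : p) :
    addOrderOf (x : M) = addOrderOf x :=
  addOrderOf_injective p.subtype.toAddMonoidHom Subtype.val_injective x

lemma ord_ne_zero_ord_val {M : Type*} [AddCommGroup M] (x : Submodule.torsion ℤ M) :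
    addOrderOf (x : M) ≠ 0 := (mem_torsion_iff_addOrderOf_ne_zero _).mp x.2

lemma ord_zero_of_noZeroSMul {N : Type*} [AddCommGroup N] [Module ℤ N]
    [NoZeroSMulDivisors ℤ N] {x : N} (hx : x ≠ 0) : addOrderOf x = 0 := by
  by_contra h
  have h1 : (addOrderOf x : ℤ) • x = 0 := addOrderOf_dvd_iff_zsmul_eq_zero.mp dvd_rfl
  rcases ‹NoZeroSMulDivisors ℤ N›.eq_zero_or_eq_zero_of_smul_eq_zero h1 with h2 | h2
  · exact h (by exact_mod_cast h2)
  · exact hx h2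

lemma key_summand {M : Type*} [AddCommGroup M] (t : M) (n : ℕ) (hn : n ≠ 0)
    (hord : addOrderOf t = n)
    (hpure : ∀ (a : ℤ) (x : M), a • t = (n : ℤ) • x → a • t = 0) :
    ∃ C : Submodule ℤ M, IsCompl (span ℤ {t}) C := by
  classical
  set Mn : Submodule ℤ M := LinearMap.range ((n : ℤ) • (LinearMap.id : M →ₗ[ℤ] M)) with hMn
  have memMn : ∀ y : M, y ∈ Mn ↔ ∃ x : M, (n : ℤ) • x = y := by
    intro y
    simp [hMn, LinearMap.mem_range]
  set Q := M ⧸ Mn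
  set π : M →ₗ[ℤ] Q := Mn.mkQ with hπ
  set tb : Q := π t with htb
  have hnt : (n : ℤ) • t = 0 := by
    rw [← hord]; exact addOrderOf_dvd_iff_zsmul_eq_zero.mp dvd_rfl
  have hordtb : addOrderOf tb = n := by
    have h1 : (addOrderOf tb : ℤ) ∣ (n : ℤ) := by
      rw [addOrderOf_dvd_iff_zsmul_eq_zero, htb, ← map_smul, hnt, map_zero]
    have h2 : (n : ℤ) ∣ (addOrderOf tb : ℤ) := by
      have h3 : (addOrderOf tb : ℤ) • tb = 0 := addOrderOf_dvd_iff_zsmul_eq_zero.mp dvd_rfl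
      rw [htb, ← map_smul] at h3
      have h4 : (addOrderOf tb : ℤ) • t ∈ Mn :=
        (Submodule.Quotient.mk_eq_zero Mn).mp h3
      obtain ⟨x, hx⟩ := (memMn _).mp h4
      have h5 := hpure (addOrderOf tb : ℤ) x hx.symm
      rw [← hord]
      exact_mod_cast addOrderOf_dvd_iff_zsmul_eq_zero.mpr h5
    exact Nat.dvd_antisymm (by exact_mod_cast h1) (by exact_mod_cast h2)
  obtain ⟨c, hc⟩ := CharacterModule.dual_surjective_of_injective (R := ℤ)
    (span ℤ {tb}).subtype (injective_subtype _) (CharacterModule.ofSpanSingleton tb)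
  have hval : (CharacterModule.ofSpanSingleton tb) ⟨tb, mem_span_singleton_self tb⟩
      = (((n : ℚ)⁻¹ : ℚ) : AddCircle (1 : ℚ)) := by
    erw [CharacterModule.ofSpanSingleton, LinearMap.toAddMonoidHom_coe, LinearMap.comp_apply,
      CharacterModule.intSpanEquivQuotAddOrderOf_apply_self,
      Submodule.liftQSpanSingleton_apply, AddMonoidHom.coe_toIntLinearMap]
    rw [hordtb, if_neg hn]
    erw [LinearMap.toSpanSingleton_apply_one]
  set F : M →ₗ[ℤ] AddCircle (1 : ℚ) := (c : Q →+ AddCircle (1:ℚ)).toIntLinearMap ∘ₗ π with hF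
  have hFt : F t = (((n : ℚ)⁻¹ : ℚ) : AddCircle (1 : ℚ)) := by
    have := congrFun (congrArg (fun (g : CharacterModule (span ℤ {tb})) => g.toFun) hc)
      ⟨tb, mem_span_singleton_self tb⟩
    exact this.trans hval
  have hFn : ∀ x : M, (n : ℤ) • F x = 0 := by
    intro x
    rw [← map_smul]
    have : (n : ℤ) • x ∈ Mn := (memMn _).mpr ⟨x, rfl⟩
    simp only [hF, LinearMap.comp_apply]
    rw [hπ]
    have h0 : Mn.mkQ ((n:ℤ) • x) = 0 := (Submodule.Quotient.mk_eq_zero Mn).mpr this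
    rw [h0, map_zero]
  refine ⟨LinearMap.ker F, IsCompl.of_eq ?_ ?_⟩
  · rw [eq_bot_iff]
    rintro x ⟨hx1, hx2⟩
    obtain ⟨a, rfl⟩ := mem_span_singleton.mp hx1
    have h1 : a • F t = 0 := by rw [← map_smul]; exact hx2
    rw [hFt] at h1
    have h2 : ((a • ((n:ℚ)⁻¹) : ℚ) : AddCircle (1:ℚ)) = 0 := by
      rw [← h1]; rfl
    obtain ⟨z, hz⟩ := (AddCircle.coe_eq_zero_iff (1:ℚ)).mp h2
    have hn' : (n:ℚ) ≠ 0 := Nat.cast_ne_zero.mpr hn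
    rw [zsmul_eq_mul, zsmul_eq_mul] at hz
    field_simp at hz
    have hzz : (z * n : ℤ) = a := by exact_mod_cast hz
    have hdvd : (n : ℤ) ∣ a := ⟨z, by rw [← hzz]; ring⟩
    have : a • t = 0 :=
      addOrderOf_dvd_iff_zsmul_eq_zero.mp (by rw [hord]; exact hdvd)
    simp [this]
  · rw [eq_top_iff]
    intro x _
    have h1 : (n : ℤ) • F x = 0 := hFn x
    obtain ⟨q, hq⟩ : ∃ q : ℚ, (q : AddCircle (1:ℚ)) = F x :=
      Quotient.exists_rep (F x)
    have h2 : ((( (n:ℤ) • q : ℚ)) : AddCircle (1:ℚ)) = 0 := by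
      rw [← h1, ← hq]; rfl
    obtain ⟨z, hz⟩ := (AddCircle.coe_eq_zero_iff (1:ℚ)).mp h2
    have hq2 : q = z * (n:ℚ)⁻¹ := by
      have hn' : (n:ℚ) ≠ 0 := Nat.cast_ne_zero.mpr hn
      rw [zsmul_eq_mul, zsmul_eq_mul] at hz
      field_simp at hz ⊢
      push_cast at hz
      linarith [hz]
    have hFx : F x = z • F t := by
      rw [hFt, ← hq, hq2, ← zsmul_eq_mul]
      exact QuotientAddGroup.mk_zsmul _ _ _
    rw [mem_sup]
    refine ⟨z • t, smul_mem _ z (mem_span_singleton_self t), x - z • t, ?_, by abel⟩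
    rw [LinearMap.mem_ker, map_sub, map_smul, hFx, sub_self]

instance quotTorsion_noZeroSMulDivisors (M : Type*) [AddCommGroup M] :
    NoZeroSMulDivisors ℤ (M ⧸ torsion ℤ M) := by
  rw [noZeroSMulDivisors_iff_right_eq_zero_of_smul]
  intro r hr m h
  exact (Module.IsTorsionFree.isSMulRegular (R := ℤ) (M := M ⧸ torsion ℤ M)
    (isRegular_iff_ne_zero.mpr hr)) (by simpa using h)

end Helpers

/-- An abelian group `M` is virtually regular iff its torsion subgroup `T(M)` and the
quotient `M / T(M)` are both virtually regular. -/
theorem abelianGroup_virtuallyRegular_iff (M : Type*) [AddCommGroup M] :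
    VirtuallyRegular ℤ M ↔
      (VirtuallyRegular ℤ (Submodule.torsion ℤ M) ∧
        VirtuallyRegular ℤ (M ⧸ Submodule.torsion ℤ M)) := by
  set T := Submodule.torsion ℤ M with hT
  constructor
  · intro hVR
    constructor
    · -- torsion part is virtually regular
      intro t0
      obtain ⟨N, ⟨N', hcompl⟩, ⟨e⟩⟩ := hVR (t0 : M)
      obtain ⟨u, rfl, hu⟩ := gen_of_iso e
      have huT : u ∈ T := by
        rw [hT, mem_torsion_iff_addOrderOf_ne_zero, hu]
        exact ord_ne_zero_ord_val t0
      set u' : T := ⟨u, huT⟩ with hu'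
      refine ⟨span ℤ {u'}, ⟨comap T.subtype N', IsCompl.of_eq ?_ ?_⟩, ⟨spanEquivOfOrderEq ?_⟩⟩
      · rw [eq_bot_iff]
        rintro x ⟨hx1, hx2⟩
        obtain ⟨a, rfl⟩ := mem_span_singleton.mp hx1
        have h1 : (a • u : M) ∈ span ℤ {u} ⊓ N' :=
          ⟨smul_mem _ a (mem_span_singleton_self u), hx2⟩
        rw [hcompl.inf_eq_bot] at h1
        have : ((a • u' : T) : M) = 0 := h1
        simp only [mem_bot]
        exact Subtype.ext this
      · rw [eq_top_iff]
        intro x _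
        have hx : (x : M) ∈ span ℤ {u} ⊔ N' := by rw [hcompl.sup_eq_top]; trivial
        obtain ⟨v, hv, w, hw, hvw⟩ := mem_sup.mp hx
        obtain ⟨a, rfl⟩ := mem_span_singleton.mp hv
        have hwT : w ∈ T := by
          have : w = (x : M) - a • u := by rw [← hvw]; abel
          rw [this]
          exact sub_mem x.2 (T.smul_mem a huT)
        rw [mem_sup]
        refine ⟨a • u', smul_mem _ a (mem_span_singleton_self u'), ⟨w, hwT⟩, hw, ?_⟩
        apply Subtype.ext
        exact hvw
      · rw [← ord_val t0, ← hu, ord_val u']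
    · -- quotient part is virtually regular
      intro xb
      obtain ⟨m, hm⟩ := T.mkQ_surjective xb
      by_cases hmT : m ∈ T
      · have hxb0 : xb = 0 := by
          rw [← hm]
          exact (Submodule.Quotient.mk_eq_zero T).mpr hmT
        refine ⟨span ℤ {xb}, ⟨⊤, ?_⟩, ⟨LinearEquiv.refl ℤ _⟩⟩
        rw [hxb0, span_zero_singleton]
        exact isCompl_bot_top
      · obtain ⟨N, ⟨N', hcompl⟩, ⟨e⟩⟩ := hVR m
        obtain ⟨u, rfl, hu⟩ := gen_of_iso e
        have hordm : addOrderOf m = 0 := by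
          by_contra h
          exact hmT ((mem_torsion_iff_addOrderOf_ne_zero m).mpr h)
        have hordu : addOrderOf u = 0 := hu.trans hordm
        have hTN' : T ≤ N' := by
          intro t ht
          have hx : t ∈ span ℤ {u} ⊔ N' := by rw [hcompl.sup_eq_top]; trivial
          obtain ⟨v, hv, w, hw, hvw⟩ := mem_sup.mp hx
          obtain ⟨a, rfl⟩ := mem_span_singleton.mp hv
          have hk : addOrderOf t ≠ 0 := (mem_torsion_iff_addOrderOf_ne_zero t).mp ht
          have hkt : (addOrderOf t : ℤ) • t = 0 := addOrderOf_dvd_iff_zsmul_eq_zero.mp dvd_rfl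
          have h2 : ((addOrderOf t : ℤ) * a) • u = -((addOrderOf t : ℤ) • w) := by
            have := congrArg (fun y => (addOrderOf t : ℤ) • y) hvw
            simp only [smul_add] at this
            rw [hkt] at this
            rw [mul_smul]
            linear_combination (norm := abel) this
          have h3 : ((addOrderOf t : ℤ) * a) • u ∈ span ℤ {u} ⊓ N' := by
            constructor
            · exact smul_mem _ _ (mem_span_singleton_self u)
            · rw [h2]; exact neg_mem (N'.smul_mem _ hw)
          rw [hcompl.inf_eq_bot, mem_bot] at h3
          have h4 : (addOrderOf t : ℤ) * a = 0 := zsmul_eq_zero_of_orderZero hordu h3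
          have ha : a = 0 := by
            rcases mul_eq_zero.mp h4 with h5 | h5
            · exact absurd (by exact_mod_cast h5) hk
            · exact h5
          rw [ha, zero_smul, zero_add] at hvw
          rw [← hvw]; exact hw
        refine ⟨map T.mkQ (span ℤ {u}), ⟨map T.mkQ N', IsCompl.of_eq ?_ ?_⟩, ?_⟩
        · rw [eq_bot_iff]
          rintro z ⟨hz1, hz2⟩
          obtain ⟨v, hv, hv2⟩ := mem_map.mp hz1
          obtain ⟨w, hw, hw2⟩ := mem_map.mp hz2
          have hvw : v - w ∈ T := by
            rw [← Submodule.Quotient.eq T]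
            show T.mkQ v = T.mkQ w
            rw [hv2, hw2]
          have hvN' : v ∈ N' := by
            have : v = (v - w) + w := by abel
            rw [this]
            exact add_mem (hTN' hvw) hw
          have : v ∈ span ℤ {u} ⊓ N' := ⟨hv, hvN'⟩
          rw [hcompl.inf_eq_bot, mem_bot] at this
          rw [mem_bot, ← hv2, this, map_zero]
        · rw [← Submodule.map_sup, hcompl.sup_eq_top, Submodule.map_top, range_mkQ]
        · have hmap : map T.mkQ (span ℤ {u}) = span ℤ {T.mkQ u} := by
            rw [Submodule.map_span, Set.image_singleton]
          rw [hmap]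
          refine ⟨spanEquivOfOrderEq ?_⟩
          have h1 : addOrderOf xb = 0 := by
            apply ord_zero_of_noZeroSMul
            rw [← hm]
            intro h
            exact hmT ((Submodule.Quotient.mk_eq_zero T).mp h)
          have h2 : addOrderOf (T.mkQ u) = 0 := by
            apply ord_zero_of_noZeroSMul
            intro h
            have huT : u ∈ T := (Submodule.Quotient.mk_eq_zero T).mp h
            have := (mem_torsion_iff_addOrderOf_ne_zero u).mp huT
            exact this hordu
          rw [h1, h2]
  · rintro ⟨hVT, hVQ⟩
    intro m
    by_cases hmT : m ∈ T
    · -- torsion case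
      set n := addOrderOf m with hn'
      have hn : n ≠ 0 := (mem_torsion_iff_addOrderOf_ne_zero m).mp hmT
      set t0 : T := ⟨m, hmT⟩ with ht0
      obtain ⟨K, ⟨C0, hcompl0⟩, ⟨e⟩⟩ := hVT t0
      obtain ⟨u', rfl, hu'⟩ := gen_of_iso e
      have hordt0 : addOrderOf t0 = n := by rw [← ord_val t0]
      have hordu' : addOrderOf u' = n := hu'.trans hordt0
      set t : M := (u' : M) with ht
      have hordt : addOrderOf t = n := by rw [ht, ord_val u', hordu']
      have hnu' : (n : ℤ) • u' = 0 := by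
        rw [← hordu']; exact addOrderOf_dvd_iff_zsmul_eq_zero.mp dvd_rfl
      have hnt : (n : ℤ) • t = 0 := by
        rw [← hordt]; exact addOrderOf_dvd_iff_zsmul_eq_zero.mp dvd_rfl
      have hpure : ∀ (a : ℤ) (x : M), a • t = (n : ℤ) • x → a • t = 0 := by
        intro a x hax
        have hx2 : ((n : ℤ) * n) • x = 0 := by
          rw [mul_smul, ← hax, smul_comm, hnt, smul_zero]
        have hxT : x ∈ T := mem_torsion_of_zsmul (by positivity) hx2
        set x' : T := ⟨x, hxT⟩ with hx'
        have hax' : a • u' = (n : ℤ) • x' := by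
          apply Subtype.ext
          exact hax
        have hsup : x' ∈ span ℤ {u'} ⊔ C0 := by rw [hcompl0.sup_eq_top]; trivial
        obtain ⟨v, hv, w, hw, hvw⟩ := mem_sup.mp hsup
        obtain ⟨b, rfl⟩ := mem_span_singleton.mp hv
        have h2 : a • u' - (n : ℤ) • b • u' = (n : ℤ) • w := by
          rw [hax', ← hvw, smul_add]
          abel
        have h3 : a • u' - (n : ℤ) • b • u' ∈ span ℤ {u'} ⊓ C0 := by
          constructor
          · exact sub_mem (smul_mem _ _ (mem_span_singleton_self u'))
              (smul_mem _ _ (smul_mem _ _ (mem_span_singleton_self u')))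
          · rw [h2]; exact C0.smul_mem _ hw
        rw [hcompl0.inf_eq_bot, mem_bot] at h3
        have h4 : a • u' = (n : ℤ) • b • u' := by
          have := sub_eq_zero.mp h3
          exact this
        have h5 : a • u' = 0 := by
          rw [h4, smul_comm, hnu', smul_zero]
        show a • t = 0
        rw [ht, ← Submodule.coe_smul, h5, ZeroMemClass.coe_zero]
      obtain ⟨C, hC⟩ := key_summand t n hn hordt hpure
      exact ⟨span ℤ {t}, ⟨C, hC⟩, ⟨spanEquivOfOrderEq (by rw [hordt, hn'])⟩⟩
    · -- free case
      have hordm : addOrderOf m = 0 := by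
        by_contra h
        exact hmT ((mem_torsion_iff_addOrderOf_ne_zero m).mpr h)
      set xb : M ⧸ T := T.mkQ m with hxb
      obtain ⟨Nq, ⟨Cq, hcomplq⟩, ⟨e⟩⟩ := hVQ xb
      obtain ⟨ub, rfl, hub⟩ := gen_of_iso e
      have hxbne : xb ≠ 0 := by
        rw [hxb]
        intro h
        exact hmT ((Submodule.Quotient.mk_eq_zero T).mp h)
      have hordxb : addOrderOf xb = 0 := ord_zero_of_noZeroSMul hxbne
      have hordub : addOrderOf ub = 0 := hub.trans hordxb
      obtain ⟨y, hy⟩ := T.mkQ_surjective ub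
      have hordy : addOrderOf y = 0 := by
        by_contra h
        have h1 : (addOrderOf y : ℤ) • y = 0 := addOrderOf_dvd_iff_zsmul_eq_zero.mp dvd_rfl
        have h2 : (addOrderOf y : ℤ) • ub = 0 := by
          rw [← hy, ← map_smul, h1, map_zero]
        have := zsmul_eq_zero_of_orderZero hordub h2
        exact h (by exact_mod_cast this)
      refine ⟨span ℤ {y}, ⟨comap T.mkQ Cq, IsCompl.of_eq ?_ ?_⟩,
        ⟨spanEquivOfOrderEq (hordm.trans hordy.symm)⟩⟩
      · rw [eq_bot_iff]
        rintro x ⟨hx1, hx2⟩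
        obtain ⟨a, rfl⟩ := mem_span_singleton.mp hx1
        have h1 : a • ub ∈ span ℤ {ub} ⊓ Cq := by
          constructor
          · exact smul_mem _ _ (mem_span_singleton_self ub)
          · have : T.mkQ (a • y) = a • ub := by rw [map_smul, hy]
            rw [← this]
            exact hx2
        rw [hcomplq.inf_eq_bot, mem_bot] at h1
        have h2 : a = 0 := zsmul_eq_zero_of_orderZero hordub h1
        rw [mem_bot, h2, zero_smul]
      · rw [eq_top_iff]
        intro x _
        have hx : T.mkQ x ∈ span ℤ {ub} ⊔ Cq := by rw [hcomplq.sup_eq_top]; trivial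
        obtain ⟨v, hv, w, hw, hvw⟩ := mem_sup.mp hx
        obtain ⟨a, rfl⟩ := mem_span_singleton.mp hv
        rw [mem_sup]
        refine ⟨a • y, smul_mem _ _ (mem_span_singleton_self y), x - a • y, ?_, by abel⟩
        show T.mkQ (x - a • y) ∈ Cq
        rw [map_sub, map_smul, hy, ← hvw]
        have : a • ub + w - a • ub = w := by abel
        rw [this]
        exact hw
end

section
/- Let R be a Dedekind domain and M a torsion R-module. Then M is completely virtually regular if and only if M is semisimple. -/
open Submodule

section Aux

variable {R M : Type*} [CommRing R] [AddCommGroup M] [Module R M]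

/-- From complete virtual regularity, extract a decomposition of a submodule `B`
with one factor isomorphic to a given cyclic submodule of `B`. -/
lemma cvr_decomp (hcvr : CompletelyVirtuallyRegular R M) (B : Submodule R M)
    {x : M} (hx : x ∈ B) :
    ∃ N N' : Submodule R M, N ≤ B ∧ N' ≤ B ∧ N ⊓ N' = ⊥ ∧ N ⊔ N' = B ∧
      Nonempty ((span R {x} : Submodule R M) ≃ₗ[R] N) := by
  obtain ⟨Nb, ⟨N'b, hc⟩, ⟨e⟩⟩ := hcvr B ⟨x, hx⟩
  have h1 : (span R {(⟨x, hx⟩ : B)}).map B.subtype = span R {x} := by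
    rw [Submodule.map_span, Set.image_singleton]
    simp
  refine ⟨Nb.map B.subtype, N'b.map B.subtype, map_subtype_le _ _, map_subtype_le _ _, ?_, ?_, ?_⟩
  · rw [← Submodule.map_inf _ B.injective_subtype, hc.inf_eq_bot, Submodule.map_bot]
  · rw [← Submodule.map_sup, hc.sup_eq_top, Submodule.map_top, Submodule.range_subtype]
  · exact ⟨(LinearEquiv.ofEq _ _ h1.symm).trans <|
      ((Submodule.equivMapOfInjective B.subtype B.injective_subtype _).symm.trans e).trans
      (Submodule.equivMapOfInjective B.subtype B.injective_subtype Nb)⟩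

variable [IsDomain R] [IsDedekindDomain R]

/-- Over a Dedekind domain, a cyclic submodule of a torsion module has only
finitely many submodules below it. -/
lemma finite_Iic_span (ht : Module.IsTorsion R M) (m : M) :
    Finite {B : Submodule R M // B ≤ span R {m}} := by
  set I := Ideal.torsionOf R M m with hI0
  have hI : I ≠ ⊥ := by
    obtain ⟨r, hr⟩ := @ht m
    intro h
    have hm : (r : R) ∈ I := hr
    rw [h, Ideal.mem_bot] at hm
    exact nonZeroDivisors.coe_ne_zero r hm
  haveI := UniqueFactorizationMonoid.fintypeSubtypeDvd I hI
  have f1 : Finite {J : Ideal R // I ≤ J} :=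
    Finite.of_injective (fun J => (⟨J.1, Ideal.dvd_iff_le.mpr J.2⟩ : {J : Ideal R // J ∣ I}))
      (fun a b hab => Subtype.ext (by simpa using congrArg Subtype.val hab))
  haveI : Finite (Set.Ici I) := f1
  have f2 : Finite (Submodule R (R ⧸ I)) :=
    Finite.of_equiv _ (Submodule.comapMkQRelIso I).toEquiv.symm
  have e2 : (R ⧸ I) ≃ₗ[R] ↥(span R {m}) := Ideal.quotTorsionOfEquivSpanSingleton R M m
  have f3 : Finite (Submodule R ↥(span R {m})) :=
    Finite.of_equiv _ (Submodule.orderIsoMapComap e2).toEquiv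
  exact Finite.of_equiv _ (Submodule.MapSubtype.orderIso (span R {m})).toEquiv

/-- Cyclic submodules of a torsion module over a Dedekind domain are semisimple,
assuming the ambient module is completely virtually regular. -/
lemma semisimple_span_of_cvr (ht : Module.IsTorsion R M)
    (hcvr : CompletelyVirtuallyRegular R M) (m : M) :
    IsSemisimpleModule R ↥(span R {m}) := by
  set A := span R {m} with hA
  haveI hfin : Finite {B : Submodule R M // B ≤ A} := finite_Iic_span ht m
  have hwf : WellFounded ((· < ·) : {B : Submodule R M // B ≤ A} →
      {B : Submodule R M // B ≤ A} → Prop) :=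
    Finite.wellFounded_of_trans_of_irrefl _
  suffices H : ∀ Bs : {B : Submodule R M // B ≤ A},
      (∃ x, span R {x} = Bs.1) → IsSemisimpleModule R ↥Bs.1 by
    exact H ⟨A, le_rfl⟩ ⟨m, rfl⟩
  intro Bs
  induction Bs using hwf.induction with
  | _ Bs IH =>
  obtain ⟨B, hBA⟩ := Bs
  rintro ⟨x, hxB⟩
  rcases eq_or_ne B ⊥ with rfl | hBbot
  · exact (isSemisimpleModule_iff R _).mpr Subsingleton.instComplementedLattice
  -- find a simple (cyclic) submodule S ≤ B
  have hmem : (⟨B, hBA⟩ : {B : Submodule R M // B ≤ A}) ∈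
      {Cs : {B : Submodule R M // B ≤ A} | Cs.1 ≠ ⊥ ∧ Cs.1 ≤ B ∧ ∃ y, Cs.1 = span R {y}} :=
    ⟨hBbot, le_rfl, x, hxB.symm⟩
  obtain ⟨⟨S, hSA⟩, ⟨hSbot, hSB, x₀, hSx₀⟩, hmin⟩ := hwf.has_min _ ⟨_, hmem⟩
  have hSx₀' : S = span R {x₀} := hSx₀
  have hatom : IsAtom S := by
    refine ⟨hSbot, fun C hCS => ?_⟩
    by_contra hCbot
    obtain ⟨y, hyC, hy0⟩ := Submodule.ne_bot_iff C |>.mp hCbot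
    have hyC' : span R {y} ≤ C := span_le.mpr (by simpa using hyC)
    have hyS : span R {y} < S := lt_of_le_of_lt hyC' hCS
    have hyB : span R {y} ≤ B := le_trans hyS.le hSB
    have hne : span R {y} ≠ ⊥ := by
      simpa [Submodule.span_singleton_eq_bot] using hy0
    exact hmin ⟨span R {y}, le_trans hyB hBA⟩ ⟨hne, hyB, y, rfl⟩
      (Subtype.mk_lt_mk.mpr hyS)
  haveI hSsimple : IsSimpleModule R ↥S := isSimpleModule_iff_isAtom.mpr hatom
  have hx₀S : x₀ ∈ S := by rw [hSx₀']; exact mem_span_singleton_self x₀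
  have hx₀B : x₀ ∈ B := hSB hx₀S
  obtain ⟨N, N', hNB, hN'B, hinf, hsup, ⟨e⟩⟩ := cvr_decomp hcvr B hx₀B
  have eSN : (↥S) ≃ₗ[R] ↥N := (LinearEquiv.ofEq _ _ hSx₀').trans e
  haveI hNsimple : IsSimpleModule R ↥N := IsSimpleModule.congr eSN.symm
  have hNatom : IsAtom N := isSimpleModule_iff_isAtom.mp hNsimple
  haveI hNss : IsSemisimpleModule R ↥N := inferInstance
  -- N' is cyclic
  have hxB' : B = span R {x} := hxB.symm
  have hxmem : x ∈ N ⊔ N' := by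
    rw [hsup, hxB']; exact mem_span_singleton_self x
  obtain ⟨n, hn, n', hn', hxsum⟩ := Submodule.mem_sup.mp hxmem
  have hN'cyc : N' = span R {n'} := by
    refine le_antisymm (fun y hy => ?_) (span_le.mpr (by simpa using hn'))
    have hyB : y ∈ B := hN'B hy
    obtain ⟨r, hr⟩ := mem_span_singleton.mp (hxB' ▸ hyB)
    have hz : y - r • n' = r • n := by
      rw [← hr, ← hxsum, smul_add]; abel
    have hzN : y - r • n' ∈ N := hz ▸ N.smul_mem r hn
    have hzN' : y - r • n' ∈ N' := N'.sub_mem hy (N'.smul_mem r hn')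
    have : y - r • n' = 0 := by
      have : y - r • n' ∈ N ⊓ N' := ⟨hzN, hzN'⟩
      rwa [hinf, Submodule.mem_bot] at this
    have : y = r • n' := by linear_combination (norm := abel) this
    exact this ▸ mem_span_singleton.mpr ⟨r, rfl⟩
  -- N' is strictly smaller than B
  have hN'lt : N' < B := by
    refine lt_of_le_of_ne hN'B fun hEq => ?_
    apply hNatom.1
    have : N ≤ N' := hEq ▸ hNB
    rw [← hinf, inf_eq_left.mpr this]
  have hN'ss : IsSemisimpleModule R ↥N' :=
    IH ⟨N', le_trans hN'B hBA⟩ (Subtype.mk_lt_mk.mpr hN'lt) ⟨n', hN'cyc.symm⟩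
  have := IsSemisimpleModule.sup hNss hN'ss
  rwa [hsup] at this

end Aux

/-- A torsion module over a Dedekind domain is completely virtually regular iff
it is semisimple. -/
theorem torsion_dedekind_completelyVirtuallyRegular_iff {R M : Type*} [CommRing R]
    [IsDomain R] [IsDedekindDomain R] [AddCommGroup M] [Module R M]
    (ht : Module.IsTorsion R M) :
    CompletelyVirtuallyRegular R M ↔ IsSemisimpleModule R M := by
  constructor
  · intro hcvr
    refine isSemisimpleModule_of_isSemisimpleModule_submodule'
      (p := fun m : M => span R {m}) (fun m => semisimple_span_of_cvr ht hcvr m) ?_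
    exact eq_top_iff'.mpr fun x =>
      Submodule.mem_iSup_of_mem x (mem_span_singleton_self x)
  · intro hss A
    haveI : IsSemisimpleModule R M := hss
    intro a
    exact ⟨span R {a}, exists_isCompl _, ⟨LinearEquiv.refl R _⟩⟩
end

section
/- Let R be a valuation domain whose unique maximal ideal P is not principal. Then every finitely presented virtually regular R-module is free. -/
section Aux

open Function Submodule

/-- In a valuation ring, a nonempty finite set has an element dividing all the others. -/
lemma aux_exists_dvd_all {R : Type*} [CommRing R] [IsDomain R] [ValuationRing R]
    (E : Finset R) : E.Nonempty → ∃ e ∈ E, ∀ x ∈ E, e ∣ x := by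
  classical
  induction E using Finset.induction_on with
  | empty => intro h; simp at h
  | @insert a s ha ih =>
    intro _
    rcases s.eq_empty_or_nonempty with rfl | hs
    · exact ⟨a, by simp⟩
    · obtain ⟨e, heE, hed⟩ := ih hs
      rcases ValuationRing.dvd_total e a with h | h
      · exact ⟨e, Finset.mem_insert_of_mem heE, by
          intro x hx
          rcases Finset.mem_insert.mp hx with rfl | hx
          · exact h
          · exact hed x hx⟩
      · exact ⟨a, Finset.mem_insert_self a s, by
          intro x hx
          rcases Finset.mem_insert.mp hx with rfl | hx
          · exact dvd_rfl
          · exact h.trans (hed x hx)⟩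

/-- From any finite generating family over a local ring, one can extract a family
generating the module whose relations all have coefficients in the maximal ideal. -/
lemma aux_exists_good_gens {R M : Type*} [CommRing R] [IsLocalRing R]
    [AddCommGroup M] [Module R M] :
    ∀ (d : ℕ) (m : Fin d → M), Submodule.span R (Set.range m) = ⊤ →
      ∃ (d' : ℕ) (m' : Fin d' → M), Submodule.span R (Set.range m') = ⊤ ∧
        ∀ v : Fin d' → R, (∑ i, v i • m' i) = 0 → ∀ i, v i ∈ IsLocalRing.maximalIdeal R := by
  intro d
  induction d with
  | zero =>
    intro m hm
    exact ⟨0, m, hm, fun v _ i => i.elim0⟩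
  | succ n ih =>
    intro m hm
    by_cases H : ∀ v : Fin (n + 1) → R, (∑ i, v i • m i) = 0 → ∀ i,
        v i ∈ IsLocalRing.maximalIdeal R
    · exact ⟨n + 1, m, hm, H⟩
    · push_neg at H
      obtain ⟨v, hv, i₀, hi₀⟩ := H
      have hu : IsUnit (v i₀) := by
        rwa [IsLocalRing.mem_maximalIdeal, mem_nonunits_iff, not_not] at hi₀
      apply ih (m ∘ i₀.succAbove)
      rw [eq_top_iff, ← hm, Submodule.span_le]
      rintro x ⟨j, rfl⟩
      by_cases hj : j = i₀
      · subst hj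
        -- m j ∈ span of the others using the relation hv
        have hsum : v j • m j + ∑ k : Fin n, v (j.succAbove k) • m (j.succAbove k) = 0 := by
          rw [← Fin.sum_univ_succAbove (fun i => v i • m i) j]; exact hv
        have hmem : v j • m j ∈ Submodule.span R (Set.range (m ∘ j.succAbove)) := by
          have : v j • m j = -∑ k : Fin n, v (j.succAbove k) • m (j.succAbove k) := by
            linear_combination (norm := module) hsum
          rw [this]
          refine Submodule.neg_mem _ (Submodule.sum_mem _ fun k _ => ?_)
          exact Submodule.smul_mem _ _ (Submodule.subset_span ⟨k, rfl⟩)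
        have : m j = (↑hu.unit⁻¹ : R) • (v j • m j) := by
          rw [smul_smul, IsUnit.val_inv_mul, one_smul]
        rw [this]
        exact Submodule.smul_mem _ _ hmem
      · obtain ⟨k, hk⟩ := Fin.exists_succAbove_eq (hj : j ≠ i₀)
        exact Submodule.subset_span ⟨k, by rw [Function.comp_apply, hk]⟩

/-- The key lemma: if `M` has a presentation whose relations all have entries in
the principal ideal `span {e}`, and `M` has a direct summand isomorphic to `R ⧸ (q)`
with `q` in the maximal ideal, then `q ∈ span {e}`. -/
lemma aux_key {R M : Type*} [CommRing R] [IsDomain R] [ValuationRing R]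
    [AddCommGroup M] [Module R M] {d : ℕ}
    (φ : (Fin d → R) →ₗ[R] M) (hφ : Function.Surjective φ) (e : R)
    (hK : ∀ v ∈ LinearMap.ker φ, ∀ i, v i ∈ Ideal.span {e})
    (q : R) (hq : q ∈ IsLocalRing.maximalIdeal R)
    (N N' : Submodule R M) (hc : IsCompl N N')
    (g : (R ⧸ (Ideal.span {q} : Ideal R)) ≃ₗ[R] N) : q ∈ Ideal.span {e} := by
  classical
  by_cases hq0 : q = 0
  · subst hq0; exact Ideal.zero_mem _
  by_contra hqI
  -- q divides e, with nonunit cofactor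
  have hqe : q ∣ e := by
    rcases ValuationRing.dvd_total e q with h | h
    · exact absurd (Ideal.mem_span_singleton.mpr h) hqI
    · exact h
  obtain ⟨s, hs⟩ := hqe
  have hsP : s ∈ IsLocalRing.maximalIdeal R := by
    rw [IsLocalRing.mem_maximalIdeal, mem_nonunits_iff]
    intro hu
    exact hqI (Ideal.mem_span_singleton.mpr ⟨(↑hu.unit⁻¹ : R), by
      rw [hs, mul_assoc, IsUnit.mul_val_inv, mul_one]⟩)
  -- the generator of N
  set x : M := (g (Submodule.Quotient.mk 1) : M) with hx
  have hxN : x ∈ N := (g (Submodule.Quotient.mk 1)).2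
  have hsmul : ∀ r : R, r • x = ((g (Submodule.Quotient.mk r) : N) : M) := by
    intro r
    have : (Submodule.Quotient.mk r : R ⧸ (Ideal.span {q} : Ideal R)) =
        r • Submodule.Quotient.mk 1 := by
      rw [← Submodule.Quotient.mk_smul, smul_eq_mul, mul_one]
    rw [this, map_smul]
    rfl
  have hann : ∀ r : R, r • x = 0 ↔ r ∈ Ideal.span {q} := by
    intro r
    rw [hsmul r, Submodule.coe_eq_zero, LinearEquiv.map_eq_zero_iff,
      Submodule.Quotient.mk_eq_zero]
  have hgen : ∀ n : N, ∃ r : R, (n : M) = r • x := by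
    intro n
    obtain ⟨r, hr⟩ := Submodule.mkQ_surjective (Ideal.span {q} : Ideal R) (g.symm n)
    refine ⟨r, ?_⟩
    rw [hsmul r]
    congr 1
    rw [show (Submodule.Quotient.mk r : R ⧸ (Ideal.span {q} : Ideal R)) = g.symm n from hr,
      LinearEquiv.apply_symm_apply]
  -- projection and coefficients
  set π := Submodule.projectionOnto N N' hc with hπ
  have hr : ∀ i : Fin d, ∃ r : R, ((π (φ (Pi.single i 1)) : N) : M) = r • x :=
    fun i => hgen _
  choose r hr using hr
  obtain ⟨w, hw⟩ := hφ x
  -- x = (∑ i, w i * r i) • x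
  have hwsum : (∑ i, w i • (Pi.single i 1 : Fin d → R)) = w := by
    ext j
    simp [Pi.single_apply]
  have hxeq : x = (∑ i, w i * r i) • x := by
    have h1 : π x = ⟨x, hxN⟩ := by
      simpa using Submodule.linearProjOfIsCompl_apply_left hc (⟨x, hxN⟩ : N)
    have h2 : ((π x : N) : M) = x := by rw [h1]
    calc x = ((π (φ w) : N) : M) := by rw [hw, h2]
    _ = ((π (φ (∑ i, w i • (Pi.single i 1 : Fin d → R))) : N) : M) := by rw [hwsum]
    _ = ∑ i, w i • ((π (φ ((Pi.single i 1 : Fin d → R))) : N) : M) := by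
        rw [map_sum, map_sum]
        push_cast [Submodule.coe_sum]
        simp_rw [map_smul]
        rfl
    _ = ∑ i, w i • (r i • x) := by simp_rw [hr]
    _ = (∑ i, w i * r i) • x := by rw [Finset.sum_smul]; simp_rw [mul_smul]
  have hone : (1 - ∑ i, w i * r i) • x = 0 := by
    rw [sub_smul, one_smul, ← hxeq, sub_self]
  have honeP : (1 - ∑ i, w i * r i) ∈ IsLocalRing.maximalIdeal R := by
    have := (hann _).mp hone
    exact (Ideal.span_singleton_le_iff_mem _).mpr hq this
  -- q • w has entries in span {e} = q * s * R, so w has entries in P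
  have hqw : q • w ∈ LinearMap.ker φ := by
    rw [LinearMap.mem_ker, map_smul, hw]
    exact (hann q).mpr (Ideal.mem_span_singleton.mpr dvd_rfl)
  have hwP : ∀ i, w i ∈ IsLocalRing.maximalIdeal R := by
    intro i
    have h1 : q * w i ∈ Ideal.span {e} := by
      have := hK _ hqw i
      simpa using this
    obtain ⟨c, hc'⟩ := Ideal.mem_span_singleton.mp h1
    have : w i = s * c := by
      apply mul_left_cancel₀ hq0
      rw [hc', hs, mul_assoc]
    rw [this]
    exact Ideal.mul_mem_right _ _ hsP
  have hsumP : (∑ i, w i * r i) ∈ IsLocalRing.maximalIdeal R :=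
    Ideal.sum_mem _ fun i _ => Ideal.mul_mem_right _ _ (hwP i)
  have h1P : (1 : R) ∈ IsLocalRing.maximalIdeal R := by
    have h := Ideal.add_mem _ honeP hsumP
    simp only [sub_add_cancel] at h
    exact h
  exact (IsLocalRing.maximalIdeal.isMaximal R).ne_top ((Ideal.eq_top_iff_one _).mpr h1P)

end Aux

/-- If the maximal ideal of a valuation domain `R` is not principal, then every finitely
presented virtually regular `R`-module is free. -/
theorem fp_virtuallyRegular_free_of_maximalIdeal_not_principal
    (R : Type*) [CommRing R] [IsDomain R] [ValuationRing R]
    (hP : ¬ (IsLocalRing.maximalIdeal R).IsPrincipal)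
    (M : Type*) [AddCommGroup M] [Module R M]
    (hfp : Module.FinitePresentation R M) (hvr : VirtuallyRegular R M) :
    Module.Free R M := by
  classical
  haveI := hfp
  haveI : Module.Finite R M := inferInstance
  obtain ⟨d0, m0, hm0⟩ := Module.Finite.exists_fin (R := R) (M := M)
  obtain ⟨d, m, hm, hmin⟩ := aux_exists_good_gens d0 m0 hm0
  set φ : (Fin d → R) →ₗ[R] M := Fintype.linearCombination R m with hφdef
  have hφ : Function.Surjective φ := by
    rw [← LinearMap.range_eq_top, hφdef, Fintype.range_linearCombination, hm]
  set K := LinearMap.ker φ with hKdef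
  have hKP : ∀ v ∈ K, ∀ i, v i ∈ IsLocalRing.maximalIdeal R := by
    intro v hv i
    refine hmin v ?_ i
    have : φ v = 0 := hv
    rwa [hφdef, Fintype.linearCombination_apply] at this
  have hKfg : K.FG := Module.FinitePresentation.fg_ker φ hφ
  by_cases hK0 : K = ⊥
  · exact Module.Free.of_equiv
      (LinearEquiv.ofBijective φ ⟨LinearMap.ker_eq_bot.mp hK0, hφ⟩)
  exfalso
  obtain ⟨S, hS⟩ := hKfg
  have hSne : S.Nonempty := by
    rcases S.eq_empty_or_nonempty with rfl | h
    · exact absurd (by simpa using hS.symm) hK0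
    · exact h
  have hdne : Nonempty (Fin d) := by
    by_contra h
    apply hK0
    rw [eq_bot_iff]
    intro v hv
    have : v = 0 := funext fun i => absurd ⟨i⟩ h
    simp [this]
  -- the set of entries of the generators of K
  set E : Finset R := (S ×ˢ (Finset.univ : Finset (Fin d))).image (fun p => p.1 p.2) with hEdef
  have hEne : E.Nonempty := by
    obtain ⟨s₁, hs₁⟩ := hSne
    obtain ⟨i₁⟩ := hdne
    exact ⟨s₁ i₁, Finset.mem_image.mpr ⟨(s₁, i₁), Finset.mem_product.mpr ⟨hs₁, Finset.mem_univ _⟩, rfl⟩⟩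
  obtain ⟨e, heE, hedvd⟩ := aux_exists_dvd_all E hEne
  obtain ⟨⟨s₀, i₀⟩, hp₀, he₀'⟩ := Finset.mem_image.mp heE
  have he₀ : s₀ i₀ = e := by simpa using he₀'
  have hs₀S : s₀ ∈ S := (Finset.mem_product.mp hp₀).1
  have hs₀K : s₀ ∈ K := by rw [← hS]; exact Submodule.subset_span hs₀S
  -- every entry of every element of K lies in span {e}
  have hKI : ∀ v ∈ K, ∀ i, v i ∈ Ideal.span {e} := by
    intro v hv i
    have hmem : v i ∈ Submodule.map (LinearMap.proj i : (Fin d → R) →ₗ[R] R) K :=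
      ⟨v, hv, rfl⟩
    rw [← hS, Submodule.map_span] at hmem
    refine Submodule.span_le.mpr ?_ hmem
    rintro y ⟨w, hwS, rfl⟩
    refine Ideal.mem_span_singleton.mpr (hedvd _ ?_)
    exact Finset.mem_image.mpr ⟨(w, i), Finset.mem_product.mpr ⟨hwS, Finset.mem_univ _⟩, rfl⟩
  have heP : e ∈ IsLocalRing.maximalIdeal R := by
    rw [← he₀]; exact hKP s₀ hs₀K i₀
  have he0 : e ≠ 0 := by
    rintro rfl
    apply hK0
    rw [eq_bot_iff]
    intro v hv
    have : ∀ i, v i = 0 := by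
      intro i
      have := hKI v hv i
      rw [Ideal.span_singleton_eq_bot.mpr rfl] at this
      exact (Submodule.mem_bot R).mp this
    exact (Submodule.mem_bot R).mpr (funext this)
  -- construct a nonzero torsion element t with e • t = 0
  have hdvd' : ∀ i, e ∣ s₀ i := fun i => Ideal.mem_span_singleton.mp (hKI s₀ hs₀K i)
  choose c hc using hdvd'
  have hci₀ : c i₀ = 1 := by
    apply mul_left_cancel₀ he0
    rw [← hc i₀, he₀, mul_one]
  set t : M := φ c with htdef
  have het : e • t = 0 := by
    have hec : e • c = s₀ := funext fun i => by
      rw [Pi.smul_apply, smul_eq_mul, ← hc i]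
    rw [htdef, ← map_smul, hec]
    exact LinearMap.mem_ker.mp hs₀K
  have ht0 : t ≠ 0 := by
    intro h
    have hcK : c ∈ K := LinearMap.mem_ker.mpr h
    have := hKP c hcK i₀
    rw [hci₀] at this
    exact (IsLocalRing.maximalIdeal.isMaximal R).ne_top ((Ideal.eq_top_iff_one _).mpr this)
  -- the torsion ideal of t is a nonzero proper principal ideal (a)
  obtain ⟨N₀, ⟨N₀', hc₀⟩, ⟨g₀⟩⟩ := hvr t
  have hN₀fp : Module.FinitePresentation R N₀ := by
    have hsurj : Function.Surjective (Submodule.projectionOnto N₀ N₀' hc₀) := fun n =>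
      ⟨n, Submodule.linearProjOfIsCompl_apply_left hc₀ n⟩
    refine Module.finitePresentation_of_surjective _ hsurj ?_
    rw [Submodule.linearProjOfIsCompl_ker]
    haveI : Module.Finite R N₀' :=
      Module.Finite.of_surjective (Submodule.projectionOnto N₀' N₀ hc₀.symm)
        (fun n => ⟨n, Submodule.linearProjOfIsCompl_apply_left hc₀.symm n⟩)
    exact Module.Finite.iff_fg.mp this
  haveI := hN₀fp
  set A := Ideal.torsionOf R M t with hAdef
  let ga : (R ⧸ A) ≃ₗ[R] N₀ := (Ideal.quotTorsionOfEquivSpanSingleton R M t).trans g₀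
  have hAfg : A.FG := by
    have hker : A = LinearMap.ker (ga.toLinearMap ∘ₗ A.mkQ) := by
      rw [LinearMap.ker_comp, LinearEquiv.ker, Submodule.comap_bot, Submodule.ker_mkQ]
    rw [hker]
    exact Module.FinitePresentation.fg_ker _
      (ga.surjective.comp (Submodule.mkQ_surjective A))
  obtain ⟨a, ha⟩ := (IsBezout.isPrincipal_of_FG A hAfg).principal
  have heA : e ∈ A := (Ideal.mem_torsionOf_iff t e).mpr het
  have ha0 : a ≠ 0 := by
    rintro rfl
    rw [ha] at heA
    simp only [Submodule.span_zero_singleton, Submodule.mem_bot] at heA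
    exact he0 heA
  have haP : a ∈ IsLocalRing.maximalIdeal R := by
    rw [IsLocalRing.mem_maximalIdeal, mem_nonunits_iff]
    intro hu
    have h1A : (1 : R) ∈ A := by
      rw [ha]
      exact Ideal.mem_span_singleton.mpr (isUnit_iff_dvd_one.mp hu)
    have := (Ideal.mem_torsionOf_iff t (1 : R)).mp h1A
    rw [one_smul] at this
    exact ht0 this
  -- a ∈ span {e}
  have haI : a ∈ Ideal.span {e} := by
    refine aux_key φ hφ e hKI a haP N₀ N₀' hc₀ ?_
    exact (Submodule.quotEquivOfEq _ _ (show Ideal.span {a} = A from ha.symm)).trans ga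
  -- every element of the maximal ideal lies in span {e}
  have hPI : IsLocalRing.maximalIdeal R ≤ Ideal.span {e} := by
    intro q hq
    rcases ValuationRing.dvd_total a q with hdq | hqa
    · obtain ⟨c', rfl⟩ := hdq
      exact Ideal.mul_mem_right _ _ haI
    · obtain ⟨cc, hcc⟩ := hqa
      have hcc0 : cc ≠ 0 := by
        rintro rfl
        rw [mul_zero] at hcc
        exact ha0 hcc
      set tq : M := cc • t with htqdef
      have htq : Ideal.torsionOf R M tq = Ideal.span {q} := by
        ext r
        rw [Ideal.mem_torsionOf_iff, htqdef, smul_smul]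
        rw [show (r * cc) • t = 0 ↔ r * cc ∈ A from (Ideal.mem_torsionOf_iff t (r * cc)).symm]
        rw [show A = Ideal.span {a} from ha, Ideal.mem_span_singleton,
          Ideal.mem_span_singleton, hcc, mul_comm q cc, mul_comm r cc]
        exact mul_dvd_mul_iff_left hcc0
      obtain ⟨Nq, ⟨Nq', hcq⟩, ⟨gq⟩⟩ := hvr tq
      refine aux_key φ hφ e hKI q hq Nq Nq' hcq ?_
      exact ((Submodule.quotEquivOfEq _ _ htq.symm).trans
        (Ideal.quotTorsionOfEquivSpanSingleton R M tq)).trans gq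
  have hIP : Ideal.span {e} ≤ IsLocalRing.maximalIdeal R :=
    (Ideal.span_singleton_le_iff_mem _).mpr heP
  exact hP ⟨⟨e, le_antisymm hPI hIP⟩⟩
end

section
/- Let R be a discrete valuation ring with maximal ideal Rp. Then a finitely presented R-module M is completely virtually regular if and only if M ≅ R^n ⊕ (R/Rp)^m for some nonnegative integers n and m. -/
section Split

variable {R M B : Type*} [Ring R] [AddCommGroup M] [Module R M]
  [AddCommGroup B] [Module R B]

/-- A surjection onto a projective module admits a complemented kernel, with complement
isomorphic to the target. -/
theorem split_summand [Module.Projective R B] (π : M →ₗ[R] B) (hπ : Function.Surjective π) :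
    ∃ N : Submodule R M, IsCompl N (LinearMap.ker π) ∧ Nonempty (B ≃ₗ[R] N) := by
  obtain ⟨s, hs⟩ := Module.projective_lifting_property π LinearMap.id hπ
  have hsec : ∀ b, π (s b) = b := fun b => congrFun (congrArg (fun f => f.toFun) hs) b
  have hinj : Function.Injective s := by
    intro a b hab
    have := hsec a; rw [hab, hsec] at this; exact this.symm
  refine ⟨LinearMap.range s, ⟨?_, ?_⟩, ⟨LinearEquiv.ofInjective s hinj⟩⟩
  · rw [disjoint_iff]
    refine le_bot_iff.mp fun x hx => ?_
    obtain ⟨⟨b, rfl⟩, hk⟩ := Submodule.mem_inf.mp hx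
    have : b = 0 := by rw [← hsec b]; exact LinearMap.mem_ker.mp hk
    simp [this]
  · rw [codisjoint_iff]
    refine top_le_iff.mp fun m _ => Submodule.mem_sup.mpr ?_
    exact ⟨s (π m), ⟨π m, rfl⟩, m - s (π m), by simp [hsec], by abel⟩

end Split

section Transport

variable {R M M₂ : Type*} [Ring R] [AddCommGroup M] [Module R M]
  [AddCommGroup M₂] [Module R M₂]

theorem virtuallyRegular_of_equiv (e : M ≃ₗ[R] M₂) (h : VirtuallyRegular R M₂) :
    VirtuallyRegular R M := by
  intro m
  obtain ⟨N₂, ⟨N₂', hc⟩, ⟨f⟩⟩ := h (e m)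
  refine ⟨N₂.map (e.symm : M₂ →ₗ[R] M), ⟨N₂'.map (e.symm : M₂ →ₗ[R] M), (Submodule.orderIsoMapComap e.symm).isCompl hc⟩, ⟨?_⟩⟩
  have h1 : (Submodule.span R {m}).map (e : M →ₗ[R] M₂) = Submodule.span R {e m} := by
    rw [Submodule.map_span]; simp
  exact ((e.submoduleMap (Submodule.span R {m})).trans (LinearEquiv.ofEq _ _ h1)).trans
    (f.trans (e.symm.submoduleMap N₂))

theorem completelyVirtuallyRegular_of_equiv (e : M ≃ₗ[R] M₂)
    (h : CompletelyVirtuallyRegular R M₂) : CompletelyVirtuallyRegular R M := by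
  intro A
  exact virtuallyRegular_of_equiv (e.submoduleMap A) (h (A.map (e : M →ₗ[R] M₂)))

end Transport

/-- Over a local ring with maximal ideal `(p)`, in a completely virtually regular module,
any element killed by `p ^ 2` is killed by `p`. -/
theorem key_p_smul {R M : Type*} [CommRing R] [IsDomain R] [IsLocalRing R]
    (p : R) (hp : IsLocalRing.maximalIdeal R = Ideal.span {p})
    [AddCommGroup M] [Module R M]
    (hcvr : CompletelyVirtuallyRegular R M) (y : M) (hy2 : (p * p) • y = 0) :
    p • y = 0 := by
  by_contra hy1
  set A : Submodule R M := Submodule.span R {y} with hA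
  obtain ⟨N, ⟨N', hc⟩, ⟨f⟩⟩ := hcvr A
    (p • (⟨y, Submodule.mem_span_singleton_self y⟩ : A))
  set yh : A := ⟨y, Submodule.mem_span_singleton_self y⟩ with hyh
  have hppy : (p * p) • yh = 0 := Subtype.ext (by simpa using hy2)
  have hppy' : p • (p • yh) = 0 := by rw [smul_smul]; exact hppy
  have hpy0 : p • yh ≠ 0 := by
    intro h
    exact hy1 (by simpa using congrArg Subtype.val h)
  -- every element of N is killed by p
  have hNtor : ∀ z : A, z ∈ N → p • z = 0 := by
    intro z hz
    obtain ⟨ξ, hξ⟩ := f.surjective ⟨z, hz⟩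
    obtain ⟨r, hr⟩ := Submodule.mem_span_singleton.mp ξ.prop
    have hξ0 : p • ξ = 0 := by
      apply Subtype.ext
      show p • (ξ : A) = 0
      rw [← hr, smul_comm, hppy', smul_zero]
    have : p • (⟨z, hz⟩ : N) = 0 := by
      rw [← hξ, ← map_smul, hξ0, map_zero]
    simpa using congrArg Subtype.val this
  -- produce a nonzero element of N
  have hξmem : p • yh ∈ (Submodule.span R {p • yh} : Submodule R A) :=
    Submodule.mem_span_singleton_self _
  set wa : A := ((f ⟨p • yh, hξmem⟩ : N) : A) with hwa_def
  have hwaN : wa ∈ N := (f ⟨p • yh, hξmem⟩).2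
  have hwne : wa ≠ 0 := by
    intro h
    have h0 : f ⟨p • yh, hξmem⟩ = 0 := Subtype.ext h
    have h1 : (⟨p • yh, hξmem⟩ : (Submodule.span R {p • yh} : Submodule R A)) = 0 := by
      apply f.injective; rw [h0, map_zero]
    exact hpy0 (by simpa using congrArg Subtype.val h1)
  obtain ⟨c, hcw⟩ := Submodule.mem_span_singleton.mp wa.prop
  have hcww : c • yh = wa := Subtype.ext (by simpa using hcw)
  have hpyN : p • yh ∈ N := by
    by_cases hcu : IsUnit c
    · obtain ⟨u, rfl⟩ := hcu
      have hyN : yh ∈ N := by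
        have h2 : ((u⁻¹ : Rˣ) : R) • wa = yh := by
          rw [← hcww, smul_smul, Units.inv_mul, one_smul]
        rw [← h2]; exact N.smul_mem _ hwaN
      exact absurd (hNtor yh hyN) hpy0
    · have hcm : c ∈ Ideal.span {p} := by
        rw [← hp]; exact hcu
      obtain ⟨d, hd⟩ := Ideal.mem_span_singleton.mp hcm
      by_cases hdu : IsUnit d
      · obtain ⟨u, rfl⟩ := hdu
        have h3 : ((u⁻¹ : Rˣ) : R) • wa = p • yh := by
          rw [← hcww, hd, smul_smul, mul_comm p, ← mul_assoc, Units.inv_mul, one_mul]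
        rw [← h3]; exact N.smul_mem _ hwaN
      · have hdm : d ∈ Ideal.span {p} := by rw [← hp]; exact hdu
        obtain ⟨e, he⟩ := Ideal.mem_span_singleton.mp hdm
        exfalso
        apply hwne
        rw [← hcww, hd, he]
        calc (p * (p * e)) • yh = e • ((p * p) • yh) := by
              rw [smul_smul, mul_comm]; ring_nf
          _ = 0 := by rw [hppy, smul_zero]
  -- decompose yh over N and N'
  obtain ⟨a, ha, b, hb, hab⟩ := Submodule.mem_sup.mp
    (by rw [hc.sup_eq_top]; trivial : yh ∈ N ⊔ N')
  have hpb : p • yh ∈ N' := by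
    have h4 : p • yh = p • a + p • b := by rw [← smul_add, hab]
    rw [h4, hNtor a ha, zero_add]; exact N'.smul_mem p hb
  have h5 : p • yh ∈ N ⊓ N' := ⟨hpyN, hpb⟩
  rw [hc.inf_eq_bot] at h5
  exact hpy0 h5

/-- Direct sums of copies of `R` and `R ⧸ (p)` over a DVR are completely virtually regular. -/
theorem cvr_standard {R : Type*} [CommRing R] [IsDomain R] [IsDiscreteValuationRing R]
    (p : R) (hp : IsLocalRing.maximalIdeal R = Ideal.span {p}) (n m : ℕ) :
    CompletelyVirtuallyRegular R ((Fin n → R) × (Fin m → R ⧸ Ideal.span {p})) := by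
  classical
  set I := Ideal.span {p} with hI
  have hirr : Irreducible p := (IsDiscreteValuationRing.irreducible_iff_uniformizer p).mpr hp
  have hprime : Prime p := UniqueFactorizationMonoid.irreducible_iff_prime.mp hirr
  haveI hmax : I.IsMaximal := hp ▸ IsLocalRing.maximalIdeal.isMaximal R
  letI : Field (R ⧸ I) := Ideal.Quotient.field I
  intro A x
  by_cases hx0 : x = 0
  · refine ⟨⊥, ⟨⊤, isCompl_bot_top⟩, ⟨?_⟩⟩
    rw [hx0, Submodule.span_zero_singleton]
    exact LinearEquiv.refl R _
  set φ1 : A →ₗ[R] (Fin n → R) := (LinearMap.fst R _ _).comp A.subtype with hφ1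
  have hφ1x : ∀ z : A, φ1 z = (z : (Fin n → R) × (Fin m → R ⧸ I)).1 := fun _ => rfl
  by_cases hu : (x : (Fin n → R) × (Fin m → R ⧸ I)).1 ≠ 0
  · -- non-torsion case
    obtain ⟨j, hj⟩ := Function.ne_iff.mp hu
    rw [Pi.zero_apply] at hj
    set φ : A →ₗ[R] R := (LinearMap.proj j).comp φ1 with hφ
    have hφx : φ x = (x : (Fin n → R) × (Fin m → R ⧸ I)).1 j := rfl
    have hrne : LinearMap.range φ ≠ ⊥ := by
      intro h
      have : φ x = 0 := by
        have := LinearMap.mem_range_self φ x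
        rw [h] at this; exact (Submodule.mem_bot R).mp this
      exact hj (by rw [← hφx, this])
    set c : R := Submodule.IsPrincipal.generator (LinearMap.range φ) with hcdef
    have hcspan : Submodule.span R {c} = LinearMap.range φ :=
      Submodule.IsPrincipal.span_singleton_generator _
    have hc0 : c ≠ 0 := by
      intro h
      rw [h, Submodule.span_zero_singleton] at hcspan
      exact hrne hcspan.symm
    -- R is isomorphic to the range of φ
    have eR : R ≃ₗ[R] LinearMap.range φ :=
      (LinearEquiv.ofInjective (LinearMap.toSpanSingleton R R c)
        (LinearMap.ker_eq_bot.mp (LinearMap.ker_toSpanSingleton R hc0))).trans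
        (LinearEquiv.ofEq _ _
          ((LinearMap.span_singleton_eq_range R R c).symm.trans hcspan))
    haveI : Module.Free R (LinearMap.range φ) := Module.Free.of_equiv eR
    obtain ⟨N, hcompl, ⟨g⟩⟩ := split_summand φ.rangeRestrict φ.surjective_rangeRestrict
    -- R is isomorphic to span {x}
    have hxinj : Function.Injective (LinearMap.toSpanSingleton R A x) := by
      intro r s hrs
      have hrs' : r • x = s • x := hrs
      have h1 := sub_smul r s x
      rw [hrs', sub_self] at h1
      have h2 : (r - s) • (x : (Fin n → R) × (Fin m → R ⧸ I)).1 j = 0 := by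
        have := congrArg (fun z : A => (z : (Fin n → R) × (Fin m → R ⧸ I)).1 j) h1
        simpa using this
      rw [smul_eq_mul, mul_eq_zero] at h2
      rcases h2 with h2 | h2
      · exact sub_eq_zero.mp h2
      · exact absurd h2 hj
    have espan : R ≃ₗ[R] (Submodule.span R {x} : Submodule R A) :=
      (LinearEquiv.ofInjective (LinearMap.toSpanSingleton R A x) hxinj).trans
        (LinearEquiv.ofEq _ _ (LinearMap.span_singleton_eq_range R A x).symm)
    exact ⟨N, ⟨_, hcompl⟩, ⟨(espan.symm.trans eR).trans g⟩⟩
  · -- torsion case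
    push_neg at hu
    have hptorq : ∀ z : R ⧸ I, p • z = 0 := by
      intro z
      obtain ⟨a, rfl⟩ := Submodule.Quotient.mk_surjective I z
      rw [← Submodule.Quotient.mk_smul, Submodule.Quotient.mk_eq_zero]
      exact Ideal.mem_span_singleton.mpr ⟨a, rfl⟩
    set W : Submodule R A := LinearMap.ker φ1 with hW
    have hxW : x ∈ W := by
      rw [LinearMap.mem_ker, hφ1x, hu]
    have hWtor : ∀ z : A, z ∈ W → p • z = 0 := by
      intro z hz
      have hz1 : (z : (Fin n → R) × (Fin m → R ⧸ I)).1 = 0 := by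
        rw [← hφ1x]; exact hz
      apply Subtype.ext
      show p • (z : (Fin n → R) × (Fin m → R ⧸ I)) = 0
      refine Prod.ext ?_ ?_
      · show p • (z : (Fin n → R) × (Fin m → R ⧸ I)).1 = 0
        rw [hz1, smul_zero]
      · show p • (z : (Fin n → R) × (Fin m → R ⧸ I)).2 = 0
        funext i
        exact hptorq _
    have hpx : p • x = 0 := hWtor x hxW
    -- W is a direct summand
    haveI : Module.Finite R (LinearMap.range φ1) := inferInstance
    haveI : Module.Free R (LinearMap.range φ1) := Module.free_of_finite_type_torsion_free'
    obtain ⟨N₀, hcompl0, -⟩ := split_summand φ1.rangeRestrict φ1.surjective_rangeRestrict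
    rw [LinearMap.ker_rangeRestrict] at hcompl0
    -- x has a nonzero coordinate in the torsion part
    have hv : (x : (Fin n → R) × (Fin m → R ⧸ I)).2 ≠ 0 := by
      intro h
      apply hx0
      apply Subtype.ext
      show (x : (Fin n → R) × (Fin m → R ⧸ I)) = 0
      exact Prod.ext hu h
    obtain ⟨j, hj⟩ := Function.ne_iff.mp hv
    rw [Pi.zero_apply] at hj
    set ψ : A →ₗ[R] R ⧸ I := (LinearMap.proj j).comp ((LinearMap.snd R _ _).comp A.subtype)
      with hψ
    have hψap : ∀ z : A, ψ z = (z : (Fin n → R) × (Fin m → R ⧸ I)).2 j := fun _ => rfl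
    set V : Submodule R A := Submodule.span R {x} with hV
    set V' : Submodule R A := W ⊓ LinearMap.ker ψ with hV'
    have hVW : V ≤ W := Submodule.span_le.mpr (Set.singleton_subset_iff.mpr hxW)
    have hsmulmk : ∀ (r a : R), r • (Ideal.Quotient.mk I a) = Ideal.Quotient.mk I (r * a) :=
      fun r a => rfl
    have hdisj : V ⊓ V' = ⊥ := by
      refine le_bot_iff.mp fun z hz => ?_
      obtain ⟨hzV, hzW, hzK⟩ := hz
      obtain ⟨r, rfl⟩ := Submodule.mem_span_singleton.mp hzV
      obtain ⟨a, ha⟩ := Ideal.Quotient.mk_surjective ((x : (Fin n → R) × (Fin m → R ⧸ I)).2 j)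
      have h3 : ψ (r • x) = 0 := hzK
      rw [map_smul, hψap, ← ha, hsmulmk, Ideal.Quotient.eq_zero_iff_mem] at h3
      have hpa : ¬ p ∣ a := by
        intro hd
        apply hj
        rw [← ha, Ideal.Quotient.eq_zero_iff_mem]
        exact Ideal.mem_span_singleton.mpr hd
      have hpr : p ∣ r := by
        rcases hprime.2.2 r a (Ideal.mem_span_singleton.mp h3) with h | h
        · exact h
        · exact absurd h hpa
      obtain ⟨t, rfl⟩ := hpr
      show (p * t) • x = 0
      rw [mul_comm, mul_smul, hpx, smul_zero]
    have hsup : V ⊔ V' = W := by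
      refine le_antisymm (sup_le hVW inf_le_left) fun w hwW => ?_
      set vj : R ⧸ I := (x : (Fin n → R) × (Fin m → R ⧸ I)).2 j with hvj
      obtain ⟨r, hr⟩ := Ideal.Quotient.mk_surjective (ψ w * vj⁻¹)
      refine Submodule.mem_sup.mpr ⟨r • x,
        Submodule.smul_mem _ _ (Submodule.mem_span_singleton_self x), w - r • x,
        Submodule.mem_inf.mpr ⟨?_, ?_⟩, by abel⟩
      · exact Submodule.sub_mem W hwW (Submodule.smul_mem W r hxW)
      · rw [LinearMap.mem_ker, map_sub, map_smul, hψap x, ← hvj]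
        obtain ⟨a, ha⟩ := Ideal.Quotient.mk_surjective vj
        rw [← ha, hsmulmk, map_mul (Ideal.Quotient.mk I) r a, ha, hr]
        rw [mul_assoc, inv_mul_cancel₀ hj, mul_one, sub_self]
    refine ⟨V, ⟨V' ⊔ N₀, ⟨?_, ?_⟩⟩, ⟨LinearEquiv.refl R V⟩⟩
    · rw [disjoint_iff]
      refine le_bot_iff.mp fun z hz => ?_
      obtain ⟨hzV, hz'⟩ := hz
      have hzW : z ∈ W := hVW hzV
      have h6 : z ∈ (V' ⊔ N₀) ⊓ W := ⟨hz', hzW⟩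
      rw [sup_inf_assoc_of_le _ (inf_le_left : V' ≤ W), hcompl0.inf_eq_bot, sup_bot_eq] at h6
      rw [← hdisj]
      exact Submodule.mem_inf.mpr ⟨hzV, h6⟩
    · rw [codisjoint_iff, ← sup_assoc, hsup]
      exact hcompl0.symm.sup_eq_top

/-- Let `R` be a discrete valuation ring with maximal ideal `Rp`. A finitely presented
`R`-module `M` is completely virtually regular iff `M ≅ R^n ⊕ (R/Rp)^m`. -/
theorem fp_completelyVirtuallyRegular_iff_of_dvr
    (R : Type*) [CommRing R] [IsDomain R] [IsDiscreteValuationRing R]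
    (p : R) (hp : IsLocalRing.maximalIdeal R = Ideal.span {p})
    (M : Type*) [AddCommGroup M] [Module R M] (hfp : Module.FinitePresentation R M) :
    CompletelyVirtuallyRegular R M ↔
      ∃ n m : ℕ,
        Nonempty (M ≃ₗ[R] ((Fin n → R) × (Fin m → R ⧸ Ideal.span {p}))) := by
  constructor
  · intro hcvr
    haveI : Module.Finite R M := (Module.finitePresentation_iff_finite R M).mp hfp
    haveI : IsNoetherian R M := isNoetherian_of_isNoetherianRing_of_finite R M
    have hirr : Irreducible p := (IsDiscreteValuationRing.irreducible_iff_uniformizer p).mpr hp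
    have hp0 : p ≠ 0 := hirr.ne_zero
    -- The torsion submodule is killed by p
    have hT : ∀ x : M, x ∈ Submodule.torsion R M → p • x = 0 := by
      intro x hx
      obtain ⟨a, hax⟩ := hx
      have ha0 : (a : R) ≠ 0 := nonZeroDivisors.coe_ne_zero a
      have hmem : (a : R) ∈ Ideal.torsionOf R M x := hax
      have hne : Ideal.torsionOf R M x ≠ ⊥ := by
        intro h
        rw [h, Submodule.mem_bot] at hmem
        exact ha0 hmem
      obtain ⟨k, hk⟩ := IsDiscreteValuationRing.ideal_eq_span_pow_irreducible hne hirr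
      match k, hk with
      | 0, hk =>
        have h1 : (1 : R) ∈ Ideal.torsionOf R M x := by
          rw [hk, pow_zero]
          exact Submodule.mem_span_singleton_self 1
        have : x = 0 := by simpa using (Ideal.mem_torsionOf_iff x 1).mp h1
        rw [this, smul_zero]
      | 1, hk =>
        have h1 : p ∈ Ideal.torsionOf R M x := by
          rw [hk, pow_one]
          exact Submodule.mem_span_singleton_self p
        exact (Ideal.mem_torsionOf_iff x p).mp h1
      | (k + 2), hk =>
        exfalso
        have hkk : p ^ (k + 2) ∈ Ideal.torsionOf R M x := by
          rw [hk]; exact Submodule.mem_span_singleton_self _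
        have h2 : (p * p) • (p ^ k • x) = 0 := by
          rw [smul_smul, ← pow_two, ← pow_add]
          have h2' : 2 + k = k + 2 := by omega
          rw [h2']
          exact (Ideal.mem_torsionOf_iff x _).mp hkk
        have h3 : p • (p ^ k • x) = 0 := key_p_smul p hp hcvr _ h2
        have h4 : p ^ (k + 1) • x = 0 := by
          rw [pow_succ, mul_comm, mul_smul]
          exact h3
        have h5 : p ^ (k + 1) ∈ Ideal.torsionOf R M x := (Ideal.mem_torsionOf_iff x _).mpr h4
        rw [hk, Ideal.mem_span_singleton] at h5
        obtain ⟨t, ht⟩ := h5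
        have h6 : p ^ (k + 1) * 1 = p ^ (k + 1) * (p * t) := by
          conv_lhs => rw [mul_one, ht]
          ring
        have h7 : (1 : R) = p * t := mul_left_cancel₀ (pow_ne_zero _ hp0) h6
        exact hirr.not_isUnit (IsUnit.of_mul_eq_one (a := p) t h7.symm)
    -- structure of M
    set I := Ideal.span {p} with hI
    set T := Submodule.torsion R M with hTdef
    have hTI : Module.IsTorsionBySet R T (I : Set R) := by
      intro x a
      obtain ⟨t, ht⟩ := Ideal.mem_span_singleton.mp a.2
      apply Subtype.ext
      show (a : R) • (x : M) = 0
      rw [ht, mul_comm, mul_smul, hT x x.2, smul_zero]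
    haveI hmax : I.IsMaximal := hp ▸ IsLocalRing.maximalIdeal.isMaximal R
    letI : Field (R ⧸ I) := Ideal.Quotient.field I
    letI : Module (R ⧸ I) T := hTI.module
    haveI : IsScalarTower R (R ⧸ I) T := hTI.isScalarTower
    haveI : Module.Finite R T := inferInstance
    haveI : Module.Finite (R ⧸ I) T := Module.Finite.of_restrictScalars_finite R (R ⧸ I) T
    set m := Module.finrank (R ⧸ I) T with hm
    have eT : T ≃ₗ[R] (Fin m → R ⧸ I) :=
      LinearEquiv.restrictScalars R (Module.finBasis (R ⧸ I) T).equivFun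
    haveI : Module.Finite R (M ⧸ T) := Module.Finite.quotient R _
    haveI : Module.Free R (M ⧸ T) := Module.free_of_finite_type_torsion_free'
    obtain ⟨N₀, hcompl, ⟨g⟩⟩ := split_summand T.mkQ (Submodule.mkQ_surjective T)
    rw [Submodule.ker_mkQ] at hcompl
    set n := Module.finrank R (M ⧸ T) with hn
    have eQ : (M ⧸ T) ≃ₗ[R] (Fin n → R) := (Module.finBasis R (M ⧸ T)).equivFun
    exact ⟨n, m, ⟨(Submodule.prodEquivOfIsCompl N₀ T hcompl).symm.trans
      (LinearEquiv.prodCongr (g.symm.trans eQ) eT)⟩⟩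
  · rintro ⟨n, m, ⟨e⟩⟩
    exact completelyVirtuallyRegular_of_equiv e (cvr_standard p hp n m)
end

section
/- Let p be a prime integer and M a nonzero finite abelian p-group. Then M is virtually regular as a ℤ-module if and only if M ≅ (ℤ/pℤ)^{a_1} ⊕ (ℤ/p^2ℤ)^{a_2} ⊕ ⋯ ⊕ (ℤ/p^kℤ)^{a_k} for some positive integer k and positive integers a_1, a_2, …, a_k (i.e., every exponent between 1 and k occurs with positive multiplicity). -/
open Submodule

noncomputable def spanZModEquiv {A : Type*} [AddCommGroup A] (a : A) :
    (Submodule.span ℤ ({a} : Set A)) ≃ₗ[ℤ] ZMod (addOrderOf a) :=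
  CharacterModule.intSpanEquivQuotAddOrderOf a ≪≫ₗ
    (Int.quotientSpanNatEquivZMod (addOrderOf a)).toAddEquiv.toIntLinearEquiv



lemma isCompl_span_single {R : Type*} [Ring R] {ι : Type*} [DecidableEq ι]
    {φ : ι → Type*} [∀ i, AddCommGroup (φ i)] [∀ i, Module R (φ i)]
    (t₀ : ι) (g₀ : φ t₀) (C : Submodule R (φ t₀)) (h : IsCompl (span R {g₀}) C) :
    IsCompl (span R ({Pi.single t₀ g₀} : Set (Π i, φ i)))
      (C.comap (LinearMap.proj t₀)) := by
  constructor
  · rw [disjoint_def]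
    intro x hx hxC
    obtain ⟨c, rfl⟩ := mem_span_singleton.mp hx
    rw [← Pi.single_smul] at hxC ⊢
    have hmem : c • g₀ ∈ C := by simpa using hxC
    have hz : c • g₀ = 0 :=
      (Submodule.disjoint_def.mp h.disjoint) _ (smul_mem _ c (mem_span_singleton_self g₀)) hmem
    rw [hz, Pi.single_zero]
  · rw [codisjoint_iff, eq_top_iff]
    intro f _
    have : f t₀ ∈ span R {g₀} ⊔ C := by rw [h.codisjoint.eq_top]; trivial
    obtain ⟨s, hs, c1, hc1, hsum⟩ := Submodule.mem_sup.mp this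
    obtain ⟨c, rfl⟩ := mem_span_singleton.mp hs
    refine Submodule.mem_sup.mpr ⟨c • Pi.single t₀ g₀,
      smul_mem _ c (mem_span_singleton_self _), f - c • Pi.single t₀ g₀, ?_, by abel⟩
    simp only [mem_comap, LinearMap.proj_apply, Pi.sub_apply]
    rw [← Pi.single_smul]
    rw [Pi.single_eq_same]
    have he : f t₀ - c • g₀ = c1 := by rw [← hsum]; abel
    rw [he]; exact hc1

lemma span_one_eq_top (n : ℕ) [NeZero n] :
    span ℤ ({(1 : ZMod n)} : Set (ZMod n)) = ⊤ := by
  rw [eq_top_iff']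
  intro x
  refine mem_span_singleton.mpr ⟨(x.val : ℤ), ?_⟩
  rw [zsmul_eq_mul, mul_one]
  push_cast
  exact ZMod.natCast_zmod_val x


theorem backward_dir (p : ℕ) (hp : p.Prime) (M : Type*) [AddCommGroup M]
    (k : ℕ) (a : Fin k → ℕ) (ha : ∀ i, 0 < a i)
    (e : M ≃ₗ[ℤ] ((i : Fin k) → Fin (a i) → ZMod (p ^ ((i : ℕ) + 1)))) :
    VirtuallyRegular ℤ M := by
  classical
  intro m
  have hord : addOrderOf m ∣ p ^ k := by
    rw [addOrderOf_dvd_iff_nsmul_eq_zero]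
    rw [← e.map_eq_zero_iff, map_nsmul]
    have hz : (p ^ k) • e m = 0 := by
      funext i s
      show (p ^ k) • (e m i s) = 0
      rw [nsmul_eq_mul]
      have h1 : ((p ^ k : ℕ) : ZMod (p ^ ((i:ℕ)+1))) = 0 :=
        (ZMod.natCast_eq_zero_iff _ _).mpr (pow_dvd_pow p (by omega))
      rw [h1, zero_mul]
    exact hz
  obtain ⟨j, hjk, hj⟩ := (Nat.dvd_prime_pow hp).mp hord
  rcases Nat.eq_zero_or_pos j with hj0 | hjpos
  · subst hj0
    have hm : m = 0 := AddMonoid.addOrderOf_eq_one_iff.mp (by simpa using hj)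
    subst hm
    refine ⟨⊥, ⟨⊤, isCompl_bot_top⟩, ?_⟩
    rw [Submodule.span_zero_singleton]
    exact ⟨LinearEquiv.refl _ _⟩
  · set i₀ : Fin k := ⟨j - 1, by omega⟩ with hi₀def
    have hi₀ : (i₀ : ℕ) + 1 = j := by simp only [hi₀def]; omega
    haveI : NeZero (p ^ ((i₀:ℕ)+1)) := ⟨(pow_pos hp.pos _).ne'⟩
    set s₀ : Fin (a i₀) := ⟨0, ha i₀⟩ with hs₀def
    set g : ((i : Fin k) → Fin (a i) → ZMod (p ^ ((i : ℕ) + 1))) :=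
      Pi.single i₀ (Pi.single s₀ (1 : ZMod (p ^ ((i₀:ℕ)+1)))) with hgdef
    have h1 : IsCompl
        (span ℤ ({Pi.single s₀ 1} : Set (Fin (a i₀) → ZMod (p ^ ((i₀:ℕ)+1)))))
        ((⊥ : Submodule ℤ (ZMod (p ^ ((i₀:ℕ)+1)))).comap (LinearMap.proj s₀)) :=
      isCompl_span_single s₀ 1 ⊥ (by rw [span_one_eq_top]; exact isCompl_top_bot)
    have h2 := isCompl_span_single (R := ℤ) (φ := fun i : Fin k => Fin (a i) → ZMod (p ^ ((i:ℕ)+1))) i₀ (Pi.single s₀ 1) _ h1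
    have h3 := (Submodule.orderIsoMapComap
      (e.symm : (∀ i : Fin k, Fin (a i) → ZMod (p ^ ((i : ℕ) + 1))) ≃ₗ[ℤ] M)).isCompl h2
    have hspan : Submodule.map (e.symm :
          (∀ i : Fin k, Fin (a i) → ZMod (p ^ ((i : ℕ) + 1))) →ₗ[ℤ] M)
        (span ℤ {g}) = span ℤ {e.symm g} := by
      rw [Submodule.map_span, Set.image_singleton]; rfl
    refine ⟨span ℤ {e.symm g}, ⟨(Submodule.orderIsoMapComap
        (e.symm : (∀ i : Fin k, Fin (a i) → ZMod (p ^ ((i : ℕ) + 1))) ≃ₗ[ℤ] M))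
        (comap (LinearMap.proj i₀) (comap (LinearMap.proj s₀) ⊥)), ?_⟩, ?_⟩
    · rw [← hspan]; exact h3
    · have horder : addOrderOf (e.symm g) = addOrderOf m := by
        have e1 : addOrderOf (e.symm g) = addOrderOf g :=
          addOrderOf_injective e.symm.toLinearMap.toAddMonoidHom e.symm.injective g
        have e2 : addOrderOf g = addOrderOf (Pi.single s₀ 1 : Fin (a i₀) → ZMod (p ^ ((i₀:ℕ)+1))) := by
          rw [hgdef]
          exact addOrderOf_injective (AddMonoidHom.single (fun i : Fin k => Fin (a i) → ZMod (p ^ ((i:ℕ)+1))) i₀) (fun x y hxy => Pi.single_injective i₀ (by exact hxy)) _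
        have e3 : addOrderOf (Pi.single s₀ 1 : Fin (a i₀) → ZMod (p ^ ((i₀:ℕ)+1)))
            = addOrderOf (1 : ZMod (p ^ ((i₀:ℕ)+1))) :=
          addOrderOf_injective (AddMonoidHom.single (fun _ : Fin (a i₀) => ZMod (p ^ ((i₀:ℕ)+1))) s₀) (fun x y hxy => Pi.single_injective s₀ (by exact hxy)) _
        rw [e1, e2, e3, ZMod.addOrderOf_one, hi₀, hj]
      exact ⟨(spanZModEquiv m).trans ((horder ▸ (spanZModEquiv (e.symm g))).symm)⟩
open Submodule

def zmodCongr {a b : ℕ} (h : a = b) : ZMod a ≃ₗ[ℤ] ZMod b := by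
  subst h; exact LinearEquiv.refl _ _

lemma zmod_gap_lemma (p : ℕ) (hp : p.Prime) {n j : ℕ} (hj : 1 ≤ j) (hne : n ≠ j)
    (z y : ZMod (p ^ n)) (h1 : (p : ℤ) • z = 0) (h2 : z = (p ^ (j - 1) : ℤ) • y) :
    ∃ w : ZMod (p ^ n), z = (p ^ j : ℤ) • w := by
  haveI : NeZero (p ^ n) := ⟨(pow_pos hp.pos _).ne'⟩
  rw [zsmul_eq_mul] at h1 h2
  push_cast at h1 h2
  rcases lt_or_gt_of_ne hne with hlt | hgt
  · refine ⟨0, ?_⟩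
    have hz : ((p : ZMod (p ^ n)) ^ (j - 1)) = 0 := by
      have h3 : ((p ^ (j - 1) : ℕ) : ZMod (p ^ n)) = 0 :=
        (ZMod.natCast_eq_zero_iff _ _).mpr (pow_dvd_pow p (by omega))
      push_cast at h3
      exact h3
    rw [smul_zero, h2, hz, zero_mul]
  · have hpj : ((p : ZMod (p ^ n)) ^ j) * y = 0 := by
      rw [h2, ← mul_assoc] at h1
      rw [← h1]
      congr 1
      rw [← pow_succ']
      congr 1
      omega
    have hdvd : p ^ n ∣ p ^ j * y.val := by
      rw [← ZMod.natCast_eq_zero_iff]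
      push_cast
      rw [ZMod.natCast_zmod_val]
      exact hpj
    have hdvd2 : p ^ (n - j) ∣ y.val := by
      have h3 : p ^ j * p ^ (n - j) ∣ p ^ j * y.val := by
        rw [← pow_add]
        have h4 : j + (n - j) = n := by omega
        rw [h4]
        exact hdvd
      exact (mul_dvd_mul_iff_left (a := p ^ j) (pow_pos hp.pos j).ne').mp h3
    obtain ⟨c, hc⟩ := hdvd2
    refine ⟨((p ^ (n - j - 1) * c : ℕ) : ZMod (p ^ n)), ?_⟩
    rw [zsmul_eq_mul, h2]
    have hy : y = ((p ^ (n - j) * c : ℕ) : ZMod (p ^ n)) := by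
      rw [← hc, ZMod.natCast_zmod_val]
    rw [hy]
    push_cast
    rw [← mul_assoc, ← mul_assoc, ← pow_add, ← pow_add]
    congr 2
    omega
theorem forward_dir (p : ℕ) (hp : p.Prime) (M : Type*) [AddCommGroup M] [Finite M] [Nontrivial M]
    (hpg : ∀ x : M, ∃ n : ℕ, (p ^ n : ℤ) • x = 0) (hreg : VirtuallyRegular ℤ M) :
    ∃ k : ℕ, 0 < k ∧ ∃ a : Fin k → ℕ, (∀ i, 0 < a i) ∧
      Nonempty (M ≃ₗ[ℤ] ((i : Fin k) → Fin (a i) → ZMod (p ^ ((i : ℕ) + 1)))) := by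
  classical
  obtain ⟨ι, hι, n, hn, ⟨e₀⟩⟩ := AddCommGroup.equiv_directSum_zmod_of_finite' M
  let e₁ : M ≃ₗ[ℤ] Π t : ι, ZMod (n t) :=
    e₀.toIntLinearEquiv ≪≫ₗ DirectSum.linearEquivFunOnFintype ℤ ι (fun t => ZMod (n t))
  have hpow : ∀ t : ι, ∃ m : ℕ, n t = p ^ m := by
    intro t
    haveI : NeZero (n t) := ⟨by have := hn t; omega⟩
    have h1 : addOrderOf (e₁.symm (Pi.single t (1 : ZMod (n t)))) = n t := by
      have h1a := addOrderOf_injective e₁.symm.toLinearMap.toAddMonoidHom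
        (fun a b hab => e₁.symm.injective hab) (Pi.single t (1 : ZMod (n t)))
      have h1b := addOrderOf_injective (AddMonoidHom.single (fun t => ZMod (n t)) t)
        (fun x y hxy => by exact Pi.single_injective t hxy) (1 : ZMod (n t))
      have h1c := ZMod.addOrderOf_one (n t)
      exact h1a.trans (h1b.trans h1c)
    obtain ⟨s, hs⟩ := hpg (e₁.symm (Pi.single t (1 : ZMod (n t))))
    have hns : (p ^ s : ℕ) • (e₁.symm (Pi.single t (1 : ZMod (n t)))) = 0 := by
      rw [← natCast_zsmul]
      push_cast
      exact hs
    have hdvd : n t ∣ p ^ s := by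
      rw [← h1]
      exact addOrderOf_dvd_of_nsmul_eq_zero hns
    obtain ⟨m, -, hm⟩ := (Nat.dvd_prime_pow hp).mp hdvd
    exact ⟨m, hm⟩
  choose m hm using hpow
  have hm1 : ∀ t, 1 ≤ m t := by
    intro t
    have h2 := hn t
    rw [hm t] at h2
    rcases Nat.eq_zero_or_pos (m t) with h0 | h0
    · rw [h0, pow_zero] at h2; omega
    · exact h0
  let e₂ : M ≃ₗ[ℤ] Π t : ι, ZMod (p ^ m t) :=
    e₁ ≪≫ₗ LinearEquiv.piCongrRight (fun t => zmodCongr (hm t))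
  haveI : Nonempty ι := by
    rcases isEmpty_or_nonempty ι with h | h
    · exfalso
      obtain ⟨A, B, hAB⟩ := exists_pair_ne M
      exact hAB (e₁.injective (funext fun t => isEmptyElim t))
    · exact h
  set k := Finset.univ.sup m with hk
  have hle : ∀ t, m t ≤ k := fun t => Finset.le_sup (Finset.mem_univ _)
  have hk1 : 1 ≤ k := le_trans (hm1 (Classical.arbitrary ι)) (hle _)
  obtain ⟨t₀, -, ht₀⟩ := Finset.exists_mem_eq_sup Finset.univ Finset.univ_nonempty m
  -- no gaps
  have nogap : ∀ j, 1 ≤ j → j ≤ k → ∃ t, m t = j := by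
    intro j hj1 hjk
    by_contra hcon
    push_neg at hcon
    haveI : NeZero (p ^ j) := ⟨(pow_pos hp.pos _).ne'⟩
    set x₁ := e₂.symm (Pi.single t₀ (1 : ZMod (p ^ m t₀))) with hx₁
    have hord₁ : addOrderOf x₁ = p ^ k := by
      have h1a := addOrderOf_injective e₂.symm.toLinearMap.toAddMonoidHom
        (fun a b hab => e₂.symm.injective hab) (Pi.single t₀ (1 : ZMod (p ^ m t₀)))
      have h1b := addOrderOf_injective (AddMonoidHom.single (fun t => ZMod (p ^ m t)) t₀)
        (fun x y hxy => by exact Pi.single_injective t₀ hxy) (1 : ZMod (p ^ m t₀))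
      have h1c := ZMod.addOrderOf_one (p ^ m t₀)
      have hkk : p ^ k = p ^ m t₀ := by rw [hk, ht₀]
      rw [hx₁, hkk]
      exact h1a.trans (h1b.trans h1c)
    set x := (p ^ (k - j)) • x₁ with hx
    have hordx : addOrderOf x = p ^ j := by
      rw [hx, addOrderOf_nsmul_of_dvd (pow_ne_zero _ hp.pos.ne')
        (hord₁ ▸ pow_dvd_pow p (Nat.sub_le k j)), hord₁,
        Nat.pow_div (Nat.sub_le k j) hp.pos]
      congr 1
      omega
    obtain ⟨N, ⟨N', hcompl⟩, ⟨ψ⟩⟩ := hreg x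
    let φ : ZMod (p ^ j) ≃ₗ[ℤ] N :=
      (zmodCongr hordx.symm) ≪≫ₗ (spanZModEquiv x).symm ≪≫ₗ ψ
    let d := Submodule.prodEquivOfIsCompl N N' hcompl
    set c : ZMod (p ^ j) := ((p ^ (j - 1) : ℕ) : ZMod (p ^ j)) with hc
    have hcz : (p : ℤ) • c = 0 := by
      rw [zsmul_eq_mul, hc]
      push_cast
      rw [← pow_succ']
      have h5 : (j - 1) + 1 = j := by omega
      rw [h5]
      have h6 : ((p : ZMod (p ^ j))) ^ j = ((p ^ j : ℕ) : ZMod (p ^ j)) := by push_cast; ring_nf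
      rw [h6, ZMod.natCast_self]
    set u : M := d (φ c, 0) with hu
    set v : M := d (φ 1, 0) with hv
    have hu1 : (p : ℤ) • u = 0 := by
      rw [hu, ← map_smul, Prod.smul_mk, smul_zero, ← map_smul, hcz, map_zero]
      exact map_zero d
    have hu2 : u = (p ^ (j - 1) : ℤ) • v := by
      rw [hu, hv, ← map_smul, Prod.smul_mk, smul_zero, ← map_smul]
      congr 2
      rw [zsmul_eq_mul, mul_one, hc]
      push_cast
      ring_nf
    have hz1 : ∀ t, (p : ℤ) • (e₂ u t) = 0 := by
      intro t
      have h7 : (p : ℤ) • e₂ u = 0 := by rw [← map_smul, hu1, map_zero]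
      exact congrFun h7 t
    have hz2 : ∀ t, e₂ u t = (p ^ (j - 1) : ℤ) • (e₂ v t) := by
      intro t
      have h7 : e₂ u = (p ^ (j - 1) : ℤ) • e₂ v := by rw [← map_smul, ← hu2]
      exact congrFun h7 t
    have hw : ∀ t : ι, ∃ w : ZMod (p ^ m t), e₂ u t = (p ^ j : ℤ) • w := by
      intro t
      exact zmod_gap_lemma p hp hj1 (hcon t) (e₂ u t) (e₂ v t) (hz1 t) (hz2 t)
    choose w hww using hw
    have hu3 : u = (p ^ j : ℤ) • e₂.symm w := by
      apply e₂.injective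
      rw [map_smul, e₂.apply_symm_apply]
      funext t
      exact hww t
    have h8 : (φ c, (0 : N')) = (p ^ j : ℤ) • d.symm (e₂.symm w) := by
      rw [← map_smul, ← hu3, hu, d.symm_apply_apply]
    have h9 : φ c = (p ^ j : ℤ) • (d.symm (e₂.symm w)).1 := by
      have := congrArg Prod.fst h8
      simpa using this
    have h10 : c = (p ^ j : ℤ) • φ.symm ((d.symm (e₂.symm w)).1) := by
      rw [← map_smul, ← h9, φ.symm_apply_apply]
    have h11 : c = 0 := by
      rw [h10, zsmul_eq_mul]
      have h12 : ((p ^ j : ℤ) : ZMod (p ^ j)) = 0 := by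
        push_cast
        have h6 : ((p : ZMod (p ^ j))) ^ j = ((p ^ j : ℕ) : ZMod (p ^ j)) := by push_cast; ring_nf
        rw [h6, ZMod.natCast_self]
      rw [h12, zero_mul]
    rw [hc] at h11
    have h13 : p ^ j ∣ p ^ (j - 1) := (ZMod.natCast_eq_zero_iff _ _).mp h11
    have h14 := (Nat.pow_dvd_pow_iff_le_right hp.one_lt).mp h13
    omega
  -- assemble the final isomorphism
  let f : ι → Fin k := fun t => ⟨m t - 1, by have := hle t; have := hm1 t; omega⟩
  let a : Fin k → ℕ := fun i => Nat.card {t : ι // f t = i}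
  have ha : ∀ i, 0 < a i := by
    intro i
    obtain ⟨t, ht⟩ := nogap ((i : ℕ) + 1) (by omega) (by have := i.isLt; omega)
    have hft : f t = i := by
      apply Fin.ext
      simp only [f, ht]
      omega
    haveI : Nonempty {t : ι // f t = i} := ⟨⟨t, hft⟩⟩
    exact Nat.card_pos
  have fiber_val : ∀ (i : Fin k) (t : {t : ι // f t = i}), m t.val = (i : ℕ) + 1 := by
    intro i t
    have h1 : (f t.val : ℕ) = (i : ℕ) := by rw [t.prop]
    simp only [f] at h1
    have := hm1 t.val
    omega
  refine ⟨k, by omega, a, ha, ⟨e₂ ≪≫ₗ ?_⟩⟩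
  exact (LinearEquiv.piCongrLeft ℤ (fun t : ι => ZMod (p ^ m t)) (Equiv.sigmaFiberEquiv f)).symm
    ≪≫ₗ LinearEquiv.piCurry ℤ (fun i (t : {t : ι // f t = i}) => ZMod (p ^ m t.val))
    ≪≫ₗ LinearEquiv.piCongrRight (fun i =>
      (LinearEquiv.piCongrRight (fun t : {t : ι // f t = i} =>
        zmodCongr (by rw [fiber_val i t]))) ≪≫ₗ
      (LinearEquiv.piCongrLeft' ℤ (fun _ => ZMod (p ^ ((i : ℕ) + 1)))
        (Finite.equivFin {t : ι // f t = i})))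


/-- A nonzero finite abelian `p`-group `M` is virtually regular as a `ℤ`-module iff
`M ≅ (ℤ/p)^{a_1} ⊕ (ℤ/p²)^{a_2} ⊕ ⋯ ⊕ (ℤ/pᵏ)^{a_k}` where `k` and all the `a_i`
are positive. -/
theorem finite_pGroup_virtuallyRegular_iff
    (p : ℕ) (hp : p.Prime) (M : Type*) [AddCommGroup M] [Finite M] [Nontrivial M]
    (hpg : ∀ x : M, ∃ n : ℕ, (p ^ n : ℤ) • x = 0) :
    VirtuallyRegular ℤ M ↔
      ∃ k : ℕ, 0 < k ∧ ∃ a : Fin k → ℕ, (∀ i, 0 < a i) ∧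
        Nonempty (M ≃ₗ[ℤ] ((i : Fin k) → Fin (a i) → ZMod (p ^ ((i : ℕ) + 1)))) := by
  constructor
  · intro h
    exact forward_dir p hp M hpg h
  · rintro ⟨k, hk, a, ha, ⟨e⟩⟩
    exact backward_dir p hp M k a ha e
end
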